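/- arXiv:2602.15177 — 3 statements merged into one kernel-verified Lean document; each statement's English description precedes it below -/
import Mathlib

section
/- Fix a tax rate α ∈ [0,1), an initial capital x ∈ ℝ and a strategy N ∈ 𝒩. Then the after-tax terminal wealth never exceeds the frictionless terminal wealth of the same strategy: V^α(x,N) ≤ V^0(x,N) almost surely. -/
open MeasureTheory Filter Finset

noncomputable section
open scoped Classical

/-- Euclidean inner product on `Fin d → ℝ`. -/
def dotp {d : ℕ} (a b : Fin d → ℝ) : ℝ := ∑ j, a j * b j

/-- Euclidean norm on `Fin d → ℝ`. -/
def eucNorm {d : ℕ} (a : Fin d → ℝ) : ℝ := Real.sqrt (∑ j, a j ^ 2)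

/-- Accumulated realized gains and losses `G_t`, given the bank account history `eta`:
`G_t = ∑_{u=1}^t ( η_{u-1} r_u + ∑_{i=0}^{u-1} ⟨N_{i,u-1} - N_{i,u}, S_u - S_i⟩ )`. -/
def Gaux {d : ℕ} (S : ℕ → Fin d → ℝ) (r : ℕ → ℝ) (N : ℕ → ℕ → Fin d → ℝ)
    (eta : ℕ → ℝ) (t : ℕ) : ℝ :=
  ∑ u ∈ Finset.Icc 1 t,
    (eta (u - 1) * r u +
      ∑ i ∈ Finset.range u, dotp (fun j => N i (u - 1) j - N i u j) (fun j => S u j - S i j))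

/-- Limited-use-of-losses tax payments `Π_t = α · max_{0 ≤ u ≤ t} G_u`. -/
def Piaux {d : ℕ} (α : ℝ) (S : ℕ → Fin d → ℝ) (r : ℕ → ℝ) (N : ℕ → ℕ → Fin d → ℝ)
    (eta : ℕ → ℝ) (t : ℕ) : ℝ :=
  α * (Finset.range (t + 1)).sup' Finset.nonempty_range_add_one (fun u => Gaux S r N eta u)

/-- `etaHist α x S r N t` is the bank-account history after trading and taxes, up to time `t`:
for `s ≤ t` it gives `η_s`, and for `s > t` it gives `η_t`.  It is defined by the
self-financing recursion `η_{-1} = x`,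
`η_t - η_{t-1} = r_t η_{t-1} 1_{t ≥ 1} + ⟨∑_{i<t}(N_{i,t-1} - N_{i,t}) - N_{t,t}, S_t⟩
  - (Π_t - Π_{t-1}) 1_{t ≥ 1}`. -/
def etaHist {d : ℕ} (α x : ℝ) (S : ℕ → Fin d → ℝ) (r : ℕ → ℝ)
    (N : ℕ → ℕ → Fin d → ℝ) : ℕ → ℕ → ℝ :=
  Nat.rec (motive := fun _ => ℕ → ℝ)
    (fun _ => x - dotp (fun j => N 0 0 j) (fun j => S 0 j))
    (fun t e => fun s =>
      if s ≤ t then e s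
      else
        e t + r (t + 1) * e t
          + dotp
              (fun j => (∑ i ∈ Finset.range (t + 1), (N i t j - N i (t + 1) j))
                - N (t + 1) (t + 1) j)
              (fun j => S (t + 1) j)
          - (Piaux α S r N e (t + 1) - Piaux α S r N e t))

/-- A discrete-time market with horizon `T`, `d` risky assets, a filtration `F`,
adapted nonnegative-price processes are not required in general, and a nonnegative adapted
interest-rate process `r`. -/
structure Market (Ω : Type*) [m0 : MeasurableSpace Ω] (T d : ℕ) where
  P : Measure Ω
  hProb : IsProbabilityMeasure P
  F : ℕ → MeasurableSpace Ω
  F_le : ∀ t, F t ≤ m0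
  F_mono : Monotone F
  S : ℕ → Ω → Fin d → ℝ
  S_adapted : ∀ t, Measurable[F t] (S t)
  r : ℕ → Ω → ℝ
  r_nonneg : ∀ t ω, 0 ≤ r t ω
  r_adapted : ∀ t, Measurable[F t] (r t)

variable {Ω : Type*} [m0 : MeasurableSpace Ω] {T d : ℕ}

/-- A trading strategy: `N i t ω j` is the number of shares of asset `j` bought at time `i`
and still held after trading at time `t`.  It is `F t`-adapted, nonnegative, nonincreasing
in `t` (for `i ≤ t < T`), forced to liquidate at `T`, and zero before the purchase date. -/
def Market.IsStrategy (M : Market Ω T d) (N : ℕ → ℕ → Ω → Fin d → ℝ) : Prop :=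
  (∀ i t, Measurable[M.F t] (N i t)) ∧
  (∀ i t ω j, 0 ≤ N i t ω j) ∧
  (∀ i t, i ≤ t → t < T → ∀ ω j, N i (t + 1) ω j ≤ N i t ω j) ∧
  (∀ i ω j, N i T ω j = 0) ∧
  (∀ i t, t < i → ∀ ω j, N i t ω j = 0)

/-- After-tax terminal wealth `V^α(x,N) = η_T`. -/
def Market.V (M : Market Ω T d) (α x : ℝ) (N : ℕ → ℕ → Ω → Fin d → ℝ) (ω : Ω) : ℝ :=
  etaHist α x (fun t => M.S t ω) (fun t => M.r t ω) (fun i t => N i t ω) T T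

/-- The frictionless (tax-free) wealth process `V^0_t(x,N) = η_t + ⟨∑_{i≤t} N_{i,t}, S_t⟩`,
where `η` is the bank account for tax rate `0`. -/
def Market.V0proc (M : Market Ω T d) (x : ℝ) (N : ℕ → ℕ → Ω → Fin d → ℝ) (t : ℕ) (ω : Ω) : ℝ :=
  etaHist 0 x (fun u => M.S u ω) (fun u => M.r u ω) (fun i u => N i u ω) t t
    + dotp (fun j => ∑ i ∈ Finset.range (t + 1), N i t ω j) (fun j => M.S t ω j)

/-- The no-arbitrage condition for tax rate `α`. -/
def Market.NA (M : Market Ω T d) (α : ℝ) : Prop :=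
  ∀ N, M.IsStrategy N → (∀ᵐ ω ∂M.P, 0 ≤ M.V α 0 N ω) → ∀ᵐ ω ∂M.P, M.V α 0 N ω = 0

/-- The set `{V^α(x,N) : N ∈ 𝒩} - L^0(F_T; ℝ₊)` of attainable after-tax terminal wealths. -/
def Market.Vset (M : Market Ω T d) (α x : ℝ) : Set (Ω → ℝ) :=
  {f | ∃ N, M.IsStrategy N ∧
    ∃ g : Ω → ℝ, Measurable[M.F T] g ∧ (∀ ω, 0 ≤ g ω) ∧ f = fun ω => M.V α x N ω - g ω}

/-- The frictionless wealth recursion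
`V_t = (1+r_t) V_{t-1} + ⟨∑_{i<t} N_{i,t-1}, S_t - (1+r_t) S_{t-1}⟩`. -/
def wealth0 {d : ℕ} (S : ℕ → Fin d → ℝ) (r : ℕ → ℝ) (N : ℕ → ℕ → Fin d → ℝ) (x : ℝ) :
    ℕ → ℝ :=
  Nat.rec (motive := fun _ => ℝ) x (fun t W =>
    (1 + r (t + 1)) * W
      + dotp (fun j => ∑ i ∈ Finset.range (t + 1), N i t j)
          (fun j => S (t + 1) j - (1 + r (t + 1)) * S t j))

/-- Frictionless terminal wealth `V^0(x,N)`. -/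
def Market.V0 (M : Market Ω T d) (x : ℝ) (N : ℕ → ℕ → Ω → Fin d → ℝ) (ω : Ω) : ℝ :=
  wealth0 (fun t => M.S t ω) (fun t => M.r t ω) (fun i t => N i t ω) x T

/-- No-arbitrage for the frictionless model. -/
def Market.NA0 (M : Market Ω T d) : Prop :=
  ∀ N, M.IsStrategy N → (∀ᵐ ω ∂M.P, 0 ≤ M.V0 0 N ω) → ∀ᵐ ω ∂M.P, M.V0 0 N ω = 0

/-- The cone `ℛ_t` of reversible one-period strategies. -/
def Market.RevCone (M : Market Ω T d) (t : ℕ) : Set (Ω → Fin d → ℝ) :=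
  {β | Measurable[M.F t] β ∧ (∀ ω j, 0 ≤ β ω j) ∧
    ∀ᵐ ω ∂M.P, dotp (β ω) (fun j => M.S (t + 1) ω j - (1 + M.r (t + 1) ω) * M.S t ω j) = 0}

/-- `q` is the purely nonreversible part `q_t(β)` of `β`: it is `F_t`-measurable, nonnegative,
`β - q` is reversible, and `q` has minimal Euclidean norm among all such decompositions. -/
def Market.IsQ (M : Market Ω T d) (t : ℕ) (β q : Ω → Fin d → ℝ) : Prop :=
  Measurable[M.F t] q ∧ (∀ ω j, 0 ≤ q ω j) ∧
  (fun ω j => β ω j - q ω j) ∈ M.RevCone t ∧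
  ∀ q' : Ω → Fin d → ℝ, Measurable[M.F t] q' → (∀ ω j, 0 ≤ q' ω j) →
    (fun ω j => β ω j - q' ω j) ∈ M.RevCone t →
    ∀ᵐ ω ∂M.P, eucNorm (q ω) ≤ eucNorm (q' ω)

/-- `β` is purely nonreversible, i.e. `q_t(β) = β`. -/
def Market.PurelyNonRev (M : Market Ω T d) (t : ℕ) (β : Ω → Fin d → ℝ) : Prop :=
  M.IsQ t β β

/-- A reaction function: `R ω a i t` may depend on `ω` only through `F_t` and on the action
history `a` only through the actions up to time `t`; it is nonnegative, nonincreasing in `t`,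
vanishes at and after the horizon `T` and before the purchase date. -/
structure ReactionFun (M : Market Ω T d) where
  R : Ω → (ℕ → ℕ → Fin d → ℝ) → ℕ → ℕ → Fin d → ℝ
  nonneg : ∀ ω a i t j, 0 ≤ R ω a i t j
  adapted_actions : ∀ ω a a' i t, (∀ i' t', t' ≤ t → a i' t' = a' i' t') →
    R ω a i t = R ω a' i t
  meas : ∀ i t, Measurable[(M.F t).prod inferInstance]
    (fun p : Ω × (ℕ → ℕ → Fin d → ℝ) => R p.1 p.2 i t)
  antitone : ∀ ω a i t, i ≤ t → t + 2 ≤ T → ∀ j, R ω a i (t + 1) j ≤ R ω a i t j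
  upper : ∀ ω a i t, T ≤ t → ∀ j, R ω a i t j = 0
  lower : ∀ ω a i t, t < i → ∀ j, R ω a i t j = 0

/-- The strategy `R(N)` produced by a reaction function from a strategy `N`. -/
def ReactionFun.apply {M : Market Ω T d} (Rf : ReactionFun M)
    (N : ℕ → ℕ → Ω → Fin d → ℝ) : ℕ → ℕ → Ω → Fin d → ℝ :=
  fun i t ω => Rf.R ω (fun i' t' => N i' t' ω) i t

/-- `max_{i=0,…,T-1, j=1,…,d} N_{i,i,j}`. -/
def stratMax {Ω : Type*} {d : ℕ} (T : ℕ) (N : ℕ → ℕ → Ω → Fin d → ℝ) (ω : Ω) : ℝ :=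
  ⨆ i ∈ Finset.range T, ⨆ j : Fin d, N i i ω j

/-- A family of random variables is bounded in `L⁰` (bounded in probability). -/
def BoundedInL0 {Ω : Type*} [MeasurableSpace Ω] (P : Measure Ω) (𝒮 : Set (Ω → ℝ)) : Prop :=
  ∀ ε : ℝ, 0 < ε → ∃ C : ℝ, ∀ f ∈ 𝒮, P {ω | C < |f ω|} ≤ ENNReal.ofReal ε

/-- The "no unbounded non-substitutable investment with bounded risk" condition. -/
def Market.NUIBR (M : Market Ω T d) (α : ℝ) : Prop :=
  ∀ x : ℝ, ∃ Rf : ReactionFun M,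
    (∀ N, M.IsStrategy N → M.IsStrategy (Rf.apply N)) ∧
    (∀ N, M.IsStrategy N → ∀ᵐ ω ∂M.P, M.V α x N ω ≤ M.V α x (Rf.apply N) ω) ∧
    ∀ K : ℝ, 0 ≤ K →
      BoundedInL0 M.P (convexHull ℝ
        {f : Ω → ℝ | ∃ N, M.IsStrategy N ∧ (∀ᵐ ω ∂M.P, -K ≤ M.V α x N ω) ∧
          f = stratMax T (Rf.apply N)})

/-- A set of random variables is closed with respect to convergence in probability
(as a subset of `L⁰`, i.e. up to almost-sure equality). -/
def ClosedInProbability {Ω : Type*} [MeasurableSpace Ω] (P : Measure Ω)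
    (𝒮 : Set (Ω → ℝ)) : Prop :=
  ∀ (f : ℕ → Ω → ℝ) (g : Ω → ℝ), (∀ n, f n ∈ 𝒮) →
    TendstoInMeasure P f Filter.atTop g → ∃ g' ∈ 𝒮, g' =ᵐ[P] g


/-- Bank account process for an artificial linear tax rule `τ`:
taxes `Π^{(τ)}_t = α · G_{τ_t}` are paid according to the rule `τ` (with `τ 0 = 0`,
so that `Π^{(τ)}_0 = 0`).  `etaTau α x S r N τ t s` gives `η^{(τ)}_s` for `s ≤ t`. -/
def etaTau {d : ℕ} (α x : ℝ) (S : ℕ → Fin d → ℝ) (r : ℕ → ℝ)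
    (N : ℕ → ℕ → Fin d → ℝ) (τ : ℕ → ℕ) : ℕ → ℕ → ℝ :=
  Nat.rec (motive := fun _ => ℕ → ℝ)
    (fun _ => x - dotp (fun j => N 0 0 j) (fun j => S 0 j))
    (fun t e => fun s =>
      if s ≤ t then e s
      else
        e t + r (t + 1) * e t
          + dotp
              (fun j => (∑ i ∈ Finset.range (t + 1), (N i t j - N i (t + 1) j))
                - N (t + 1) (t + 1) j)
              (fun j => S (t + 1) j)
          - (α * Gaux S r N e (τ (t + 1)) - α * Gaux S r N e (τ t)))

variable {Ω : Type*} [m0 : MeasurableSpace Ω] {T d : ℕ}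

/-- An artificial linear tax rule: an adapted `{0,…,T}`-valued process `τ` with `τ_0 = 0`,
`τ` nondecreasing in `t`, `τ_t ≤ t`, and `τ_{τ_t} = τ_t` whenever `τ_t ≥ 1`. -/
def Market.IsTaxRule (M : Market Ω T d) (τ : ℕ → Ω → ℕ) : Prop :=
  (∀ ω, τ 0 ω = 0) ∧
  (∀ t, Measurable[M.F t] (τ t)) ∧
  (∀ t ω, τ t ω ≤ t) ∧
  (∀ t ω, τ t ω ≤ T) ∧
  (∀ s t, s ≤ t → ∀ ω, τ s ω ≤ τ t ω) ∧
  (∀ t ω, 1 ≤ τ t ω → τ (τ t ω) ω = τ t ω)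

/-- Terminal bank account `η^{(τ)}_T(N)` under the artificial tax rule `τ`. -/
def Market.etaTauT (M : Market Ω T d) (α x : ℝ) (N : ℕ → ℕ → Ω → Fin d → ℝ)
    (τ : ℕ → Ω → ℕ) (ω : Ω) : ℝ :=
  etaTau α x (fun t => M.S t ω) (fun t => M.r t ω) (fun i t => N i t ω) (fun t => τ t ω) T T

/-- A strategy realizes losses: it does not keep shares that trade below their purchase
price. -/
def Market.RealizesLosses (M : Market Ω T d) (N : ℕ → ℕ → Ω → Fin d → ℝ) : Prop :=
  ∀ i t j, i < t → t ≤ T → ∀ᵐ ω ∂M.P, M.S t ω j < M.S i ω j → N i t ω j = 0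

/-- The loss bound `L_t(N) = ((−x) ∨ 0 + ∑_{s<t} ⟨q_s(∑_{i≤s} N_{i,s}), S_s⟩)(1+r̄)^T`,
expressed through a given family `q s` of purely nonreversible parts. -/
def Lfun {Ω : Type*} {d : ℕ} (x rbar : ℝ) (T : ℕ) (S : ℕ → Ω → Fin d → ℝ)
    (q : ℕ → Ω → Fin d → ℝ) (t : ℕ) (ω : Ω) : ℝ :=
  (max (-x) 0 + ∑ s ∈ Finset.range t, dotp (q s ω) (fun j => S s ω j)) * (1 + rbar) ^ T

/-- A stopping time of the filtration `F`. -/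
def IsStoppingTimeFun {Ω : Type*} (F : ℕ → MeasurableSpace Ω) (τ : Ω → ℕ) : Prop :=
  ∀ t : ℕ, MeasurableSet[F t] {ω | τ ω ≤ t}

/-- The family of random variables over which the essential infimum defining `ε_t` is
taken. -/
def Market.epsFamily (M : Market Ω T d) (t : ℕ) : Set (Ω → ENNReal) :=
  {g | ∃ (ε : Ω → ℝ) (A : Set Ω) (N : ℕ → ℕ → Ω → Fin d → ℝ),
    Measurable[M.F t] ε ∧ (∀ ω, ε ω ∈ Set.Icc (0:ℝ) 1) ∧
    MeasurableSet[M.F t] A ∧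
    M.IsStrategy N ∧ (∀ i, i < t → ∀ ω j, N i i ω j = 0) ∧
    M.PurelyNonRev t (fun ω => N t t ω) ∧
    (∀ᵐ ω ∂M.P, eucNorm (N t t ω) = Set.indicator A (fun _ => (1:ℝ)) ω) ∧
    (∀ᵐ ω ∂M.P,
      (M.P[Set.indicator {ω' | M.V0 0 N ω' ≤ - ε ω'} (fun _ => (1:ℝ)) | M.F t]) ω ≤ ε ω) ∧
    g = fun ω => if ω ∈ A then ENNReal.ofReal (ε ω) else (⊤ : ENNReal)}

/-- `e` is the essential infimum of the family `𝒮` of `[0,∞]`-valued random variables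
(with respect to `P`, measurable with respect to `m'`). -/
def IsEssInfOfSet {Ω : Type*} [MeasurableSpace Ω] (m' : MeasurableSpace Ω) (P : Measure Ω)
    (𝒮 : Set (Ω → ENNReal)) (e : Ω → ENNReal) : Prop :=
  Measurable[m'] e ∧ (∀ g ∈ 𝒮, ∀ᵐ ω ∂P, e ω ≤ g ω) ∧
  ∀ e' : Ω → ENNReal, Measurable[m'] e' → (∀ g ∈ 𝒮, ∀ᵐ ω ∂P, e' ω ≤ g ω) →
    ∀ᵐ ω ∂P, e' ω ≤ e ω

/-- The positive part of an extended-real number, as an element of `[0,∞]`. -/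
def erealPos (y : EReal) : ENNReal := if y = ⊤ then ⊤ else ENNReal.ofReal y.toReal

/-- A utility function: `U = -∞` on the negative half-line, real-valued, nondecreasing and
concave on the positive half-line (with real restriction `u`), and continuous from the
right at `0`. -/
structure UtilityFun where
  U : ℝ → EReal
  u : ℝ → ℝ
  neg_bot : ∀ y : ℝ, y < 0 → U y = ⊥
  pos_real : ∀ y : ℝ, 0 < y → U y = (u y : EReal)
  mono : MonotoneOn u (Set.Ioi (0:ℝ))
  concave : ConcaveOn ℝ (Set.Ioi (0:ℝ)) u
  zero_lim : Filter.Tendsto U (nhdsWithin 0 (Set.Ioi (0:ℝ))) (nhds (U 0))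

/-- Expected utility `E[U(X)] = E[U⁺(X)] - E[U⁻(X)]`, with the convention that it equals
`-∞` whenever `E[U⁻(X)] = ∞`. -/
def expUtility {Ω : Type*} [MeasurableSpace Ω] (P : Measure Ω) (Uf : UtilityFun)
    (X : Ω → ℝ) : EReal :=
  if (∫⁻ ω, erealPos (-(Uf.U (X ω))) ∂P) = ⊤ then ⊥
  else ((∫⁻ ω, erealPos (Uf.U (X ω)) ∂P : ENNReal) : EReal)
    - ((∫⁻ ω, erealPos (-(Uf.U (X ω))) ∂P : ENNReal) : EReal)

/-- The value function `u^α(x) = sup_{N ∈ 𝒜^α(x)} E[U(V^α(x,N))]` of the utility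
maximization problem with taxes. -/
def Market.valueFn (M : Market Ω T d) (Uf : UtilityFun) (α x : ℝ) : EReal :=
  ⨆ N ∈ {N : ℕ → ℕ → Ω → Fin d → ℝ |
      M.IsStrategy N ∧ ∀ᵐ ω ∂M.P, 0 ≤ M.V α x N ω},
    expUtility M.P Uf (fun ω => M.V α x N ω)

/-- The value function `u^0(x)` of the frictionless utility maximization problem. -/
def Market.valueFn0 (M : Market Ω T d) (Uf : UtilityFun) (x : ℝ) : EReal :=
  ⨆ N ∈ {N : ℕ → ℕ → Ω → Fin d → ℝ |
      M.IsStrategy N ∧ ∀ᵐ ω ∂M.P, 0 ≤ M.V0 x N ω},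
    expUtility M.P Uf (fun ω => M.V0 x N ω)

/-- The set `{V^α(x,N) : N ∈ 𝒜^α(x)} - L^0(F_T; ℝ₊)`. -/
def Market.VsetNonneg (M : Market Ω T d) (α x : ℝ) : Set (Ω → ℝ) :=
  {f | ∃ N, M.IsStrategy N ∧ (∀ᵐ ω ∂M.P, 0 ≤ M.V α x N ω) ∧
    ∃ g : Ω → ℝ, Measurable[M.F T] g ∧ (∀ ω, 0 ≤ g ω) ∧ f = fun ω => M.V α x N ω - g ω}

/-- The set `{V^0(x,N) : N ∈ 𝒩} - L^0(F_T; ℝ₊)` for the frictionless model. -/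
def Market.V0set (M : Market Ω T d) (x : ℝ) : Set (Ω → ℝ) :=
  {f | ∃ N, M.IsStrategy N ∧
    ∃ g : Ω → ℝ, Measurable[M.F T] g ∧ (∀ ω, 0 ≤ g ω) ∧ f = fun ω => M.V0 x N ω - g ω}

/-- A measurable (set-valued) random set: preimages of open sets are measurable. -/
def MeasRandomSet {Ω : Type*} (m : MeasurableSpace Ω) {d : ℕ}
    (K : Ω → Set (Fin d → ℝ)) : Prop :=
  ∀ O : Set (Fin d → ℝ), IsOpen O → MeasurableSet[m] {ω | (K ω ∩ O).Nonempty}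

/-- The random set `A_t = {β ∈ 𝒫_t : 1 + r_{t+1} + ⟨β, S_{t+1} - (1+r_{t+1})S_t⟩ ≥ 0 a.s.}`. -/
def Market.AtSet (M : Market Ω T d) (t : ℕ) : Set (Ω → Fin d → ℝ) :=
  {β | M.PurelyNonRev t β ∧
    ∀ᵐ ω ∂M.P, 0 ≤ 1 + M.r (t + 1) ω
      + dotp (β ω) (fun j => M.S (t + 1) ω j - (1 + M.r (t + 1) ω) * M.S t ω j)}

lemma etaHist_succ_apply {d : ℕ} (α x : ℝ) (S : ℕ → Fin d → ℝ) (r : ℕ → ℝ)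
    (N : ℕ → ℕ → Fin d → ℝ) (t s : ℕ) :
    etaHist α x S r N (t + 1) s =
      if s ≤ t then etaHist α x S r N t s
      else etaHist α x S r N t t + r (t + 1) * etaHist α x S r N t t
          + dotp
              (fun j => (∑ i ∈ Finset.range (t + 1), (N i t j - N i (t + 1) j))
                - N (t + 1) (t + 1) j)
              (fun j => S (t + 1) j)
          - (Piaux α S r N (etaHist α x S r N t) (t + 1)
              - Piaux α S r N (etaHist α x S r N t) t) := rfl

lemma piaux_mono_aux {d : ℕ} (α : ℝ) (hα : 0 ≤ α) (S : ℕ → Fin d → ℝ) (r : ℕ → ℝ)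
    (N : ℕ → ℕ → Fin d → ℝ) (e : ℕ → ℝ) (t : ℕ) :
    Piaux α S r N e t ≤ Piaux α S r N e (t + 1) := by
  unfold Piaux
  apply mul_le_mul_of_nonneg_left _ hα
  exact Finset.sup'_mono _ (Finset.range_subset_range.2 (by omega)) _

lemma eta_le_aux {d : ℕ} (α x : ℝ) (hα : 0 ≤ α) (S : ℕ → Fin d → ℝ) (r : ℕ → ℝ)
    (hr : ∀ t, 0 ≤ r t) (N : ℕ → ℕ → Fin d → ℝ) :
    ∀ t, etaHist α x S r N t t ≤ etaHist 0 x S r N t t := by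
  intro t
  induction t with
  | zero => exact le_of_eq rfl
  | succ t ih =>
    rw [etaHist_succ_apply, etaHist_succ_apply, if_neg (by omega), if_neg (by omega)]
    have h0 : Piaux 0 S r N (etaHist 0 x S r N t) (t + 1)
        - Piaux 0 S r N (etaHist 0 x S r N t) t = 0 := by simp [Piaux]
    have h1 : 0 ≤ Piaux α S r N (etaHist α x S r N t) (t + 1)
        - Piaux α S r N (etaHist α x S r N t) t :=
      sub_nonneg.2 (piaux_mono_aux α hα S r N _ t)
    have hr' := hr (t + 1)
    nlinarith [ih]

/-- For a tax rate `α ∈ [0,1)`, an initial capital `x` and a strategy `N`,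
the after-tax terminal wealth never exceeds the frictionless terminal wealth of the same
strategy: `V^α(x,N) ≤ V^0(x,N)` a.s. -/
theorem tax_wealth_le_frictionless_wealth
    (M : Market Ω T d) (α : ℝ) (hα0 : 0 ≤ α) (hα1 : α < 1) (x : ℝ)
    (N : ℕ → ℕ → Ω → Fin d → ℝ) (hN : M.IsStrategy N) :
    ∀ᵐ ω ∂M.P, M.V α x N ω ≤ M.V0proc x N T ω := by
  refine Filter.Eventually.of_forall fun ω => ?_
  have h := eta_le_aux α x hα0 (fun t => M.S t ω) (fun t => M.r t ω)
    (fun t => M.r_nonneg t ω) (fun i t => N i t ω) T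
  have hz : dotp (fun j => ∑ i ∈ Finset.range (T + 1), N i T ω j)
      (fun j => M.S T ω j) = 0 := by
    simp [dotp, hN.2.2.2.1]
  unfold Market.V Market.V0proc
  rw [hz]
  simpa using h

end
end

section
/- Fix a tax rate α ∈ [0,1). The model with tax rate α satisfies the no-arbitrage (NA) condition if and only if the corresponding tax-free model (tax rate 0) satisfies the NA condition. -/
open MeasureTheory Filter Finset

noncomputable section
open scoped Classical

variable {Ω : Type*} [m0 : MeasurableSpace Ω] {T d : ℕ}

variable {Ω : Type*} [m0 : MeasurableSpace Ω] {T d : ℕ}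

/-! ### Auxiliary pathwise lemmas -/

section PathwiseAux

variable {d : ℕ} (S : ℕ → Fin d → ℝ) (r : ℕ → ℝ) (N : ℕ → ℕ → Fin d → ℝ) (α x : ℝ)

lemma etaHist_zero (s : ℕ) :
    etaHist α x S r N 0 s = x - dotp (fun j => N 0 0 j) (fun j => S 0 j) := rfl

lemma etaHist_succ (t s : ℕ) :
    etaHist α x S r N (t + 1) s =
      if s ≤ t then etaHist α x S r N t s
      else
        etaHist α x S r N t t + r (t + 1) * etaHist α x S r N t t
          + dotp
              (fun j => (∑ i ∈ Finset.range (t + 1), (N i t j - N i (t + 1) j))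
                - N (t + 1) (t + 1) j)
              (fun j => S (t + 1) j)
          - (Piaux α S r N (etaHist α x S r N t) (t + 1)
              - Piaux α S r N (etaHist α x S r N t) t) := rfl

lemma etaHist_stable : ∀ t s, s ≤ t → etaHist α x S r N t s = etaHist α x S r N s s := by
  intro t
  induction t with
  | zero => intro s hs; interval_cases s; rfl
  | succ t ih =>
    intro s hs
    rw [etaHist_succ]
    by_cases h : s ≤ t
    · rw [if_pos h, ih s h]
    · have : s = t + 1 := by omega
      subst this
      rw [if_neg h, etaHist_succ, if_neg h]

lemma Piaux_succ_ge (e : ℕ → ℝ) (hα : 0 ≤ α) (t : ℕ) :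
    Piaux α S r N e t ≤ Piaux α S r N e (t + 1) := by
  unfold Piaux
  apply mul_le_mul_of_nonneg_left _ hα
  exact Finset.sup'_mono _ (Finset.range_subset_range.2 (by omega)) _

lemma etaHist0_succ (t : ℕ) :
    etaHist 0 x S r N (t + 1) (t + 1) =
      etaHist 0 x S r N t t + r (t + 1) * etaHist 0 x S r N t t
        + dotp
            (fun j => (∑ i ∈ Finset.range (t + 1), (N i t j - N i (t + 1) j))
              - N (t + 1) (t + 1) j)
            (fun j => S (t + 1) j) := by
  rw [etaHist_succ, if_neg (by omega)]
  simp [Piaux]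

lemma eta_le_eta0 (hα : 0 ≤ α) (hr : ∀ u, 0 ≤ r u) :
    ∀ t, etaHist α x S r N t t ≤ etaHist 0 x S r N t t := by
  intro t
  induction t with
  | zero => exact le_refl _
  | succ t ih =>
    rw [etaHist0_succ, etaHist_succ, if_neg (by omega)]
    have h1 : Piaux α S r N (etaHist α x S r N t) t
        ≤ Piaux α S r N (etaHist α x S r N t) (t + 1) := Piaux_succ_ge S r N α _ hα t
    have h2 : r (t + 1) * etaHist α x S r N t t ≤ r (t + 1) * etaHist 0 x S r N t t :=
      mul_le_mul_of_nonneg_left ih (hr (t + 1))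
    linarith

end PathwiseAux


section Wealth0

variable {d : ℕ} (S : ℕ → Fin d → ℝ) (r : ℕ → ℝ) (N : ℕ → ℕ → Fin d → ℝ)

/-- The tax-free wealth process `η⁰_t + ⟨H_t, S_t⟩`. -/
def w0aux (t : ℕ) : ℝ :=
  etaHist 0 0 S r N t t
    + dotp (fun j => ∑ i ∈ Finset.range (t + 1), N i t j) (fun j => S t j)

lemma w0aux_zero : w0aux S r N 0 = 0 := by
  simp [w0aux, etaHist_zero, dotp, Finset.sum_range_one]

lemma w0aux_succ (t : ℕ) :
    w0aux S r N (t + 1) = (1 + r (t + 1)) * w0aux S r N t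
      + dotp (fun j => ∑ i ∈ Finset.range (t + 1), N i t j)
          (fun j => S (t + 1) j - (1 + r (t + 1)) * S t j) := by
  unfold w0aux
  rw [etaHist0_succ]
  unfold dotp
  have h2 : (∑ j, ((∑ i ∈ Finset.range (t + 1), (N i t j - N i (t + 1) j))
          - N (t + 1) (t + 1) j) * S (t + 1) j)
      + ∑ j, (∑ i ∈ Finset.range (t + 1 + 1), N i (t + 1) j) * S (t + 1) j
      = ∑ j, (∑ i ∈ Finset.range (t + 1), N i t j) * S (t + 1) j := by
    rw [← Finset.sum_add_distrib]
    refine Finset.sum_congr rfl fun j _ => ?_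
    rw [Finset.sum_sub_distrib, Finset.sum_range_succ (fun i => N i (t + 1) j) (t + 1)]
    ring
  have h3 : ∑ j, (∑ i ∈ Finset.range (t + 1), N i t j)
        * (S (t + 1) j - (1 + r (t + 1)) * S t j)
      = (∑ j, (∑ i ∈ Finset.range (t + 1), N i t j) * S (t + 1) j)
        - (1 + r (t + 1)) * ∑ j, (∑ i ∈ Finset.range (t + 1), N i t j) * S t j := by
    rw [Finset.mul_sum, ← Finset.sum_sub_distrib]
    exact Finset.sum_congr rfl fun j _ => by ring
  linear_combination h2 - h3

lemma w0aux_eq_eta (t : ℕ) (h : ∀ j, N (t) (t) j = 0)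
    (h' : ∀ i j, i ≤ t → N i t j = 0) :
    w0aux S r N t = etaHist 0 0 S r N t t := by
  have : (∑ j, (∑ i ∈ Finset.range (t + 1), N i t j) * S t j) = 0 := by
    refine Finset.sum_eq_zero fun j _ => ?_
    have : (∑ i ∈ Finset.range (t + 1), N i t j) = 0 :=
      Finset.sum_eq_zero fun i hi => h' i j (by simpa [Nat.lt_succ_iff] using hi)
    rw [this, zero_mul]
  simp [w0aux, dotp, this]

end Wealth0

section MeasAux

variable {Ω : Type*} [m0 : MeasurableSpace Ω] {T d : ℕ}

lemma eta0_measurable (M : Market Ω T d) (N : ℕ → ℕ → Ω → Fin d → ℝ) (hN : M.IsStrategy N) :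
    ∀ t, Measurable[M.F t]
      (fun ω => etaHist 0 0 (fun u => M.S u ω) (fun u => M.r u ω) (fun i u => N i u ω) t t) := by
  intro t
  induction t with
  | zero =>
    have hrw : (fun ω =>
        etaHist 0 0 (fun u => M.S u ω) (fun u => M.r u ω) (fun i u => N i u ω) 0 0)
        = fun ω => 0 - ∑ j, N 0 0 ω j * M.S 0 ω j := rfl
    rw [hrw]
    apply Measurable.sub measurable_const
    apply Finset.measurable_sum
    intro j _
    exact ((measurable_pi_apply j).comp (hN.1 0 0)).mul
      ((measurable_pi_apply j).comp (M.S_adapted 0))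
  | succ t ih =>
    have hrw : (fun ω =>
        etaHist 0 0 (fun u => M.S u ω) (fun u => M.r u ω) (fun i u => N i u ω) (t + 1) (t + 1))
        = fun ω =>
          etaHist 0 0 (fun u => M.S u ω) (fun u => M.r u ω) (fun i u => N i u ω) t t
            + M.r (t + 1) ω
              * etaHist 0 0 (fun u => M.S u ω) (fun u => M.r u ω) (fun i u => N i u ω) t t
            + ∑ j, ((∑ i ∈ Finset.range (t + 1), (N i t ω j - N i (t + 1) ω j))
                - N (t + 1) (t + 1) ω j) * M.S (t + 1) ω j := by
      funext ω
      rw [etaHist0_succ]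
      rfl
    rw [hrw]
    have hE : Measurable[M.F (t + 1)]
        (fun ω => etaHist 0 0 (fun u => M.S u ω) (fun u => M.r u ω) (fun i u => N i u ω) t t) :=
      ih.mono (M.F_mono (Nat.le_succ t)) le_rfl
    apply Measurable.add
    apply Measurable.add hE ((M.r_adapted (t + 1)).mul hE)
    apply Finset.measurable_sum
    intro j _
    apply Measurable.mul _ ((measurable_pi_apply j).comp (M.S_adapted (t + 1)))
    apply Measurable.sub
    · apply Finset.measurable_sum
      intro i _
      exact (((measurable_pi_apply j).comp (hN.1 i t)).mono (M.F_mono (Nat.le_succ t)) le_rfl).sub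
        ((measurable_pi_apply j).comp (hN.1 i (t + 1)))
    · exact (measurable_pi_apply j).comp (hN.1 (t + 1) (t + 1))

lemma w0_measurable (M : Market Ω T d) (N : ℕ → ℕ → Ω → Fin d → ℝ) (hN : M.IsStrategy N)
    (t : ℕ) :
    Measurable[M.F t]
      (fun ω => w0aux (fun u => M.S u ω) (fun u => M.r u ω) (fun i u => N i u ω) t) := by
  have hrw : (fun ω => w0aux (fun u => M.S u ω) (fun u => M.r u ω) (fun i u => N i u ω) t)
      = fun ω =>
        etaHist 0 0 (fun u => M.S u ω) (fun u => M.r u ω) (fun i u => N i u ω) t t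
          + ∑ j, (∑ i ∈ Finset.range (t + 1), N i t ω j) * M.S t ω j := rfl
  rw [hrw]
  apply Measurable.add (eta0_measurable M N hN t)
  apply Finset.measurable_sum
  intro j _
  apply Measurable.mul _ ((measurable_pi_apply j).comp (M.S_adapted t))
  exact Finset.measurable_sum _ fun i _ => (measurable_pi_apply j).comp (hN.1 i t)

end MeasAux


section OnePeriod

variable {d : ℕ}

/-- The one-period strategy that buys `ξ` at time `t` and sells it at `t + 1`. -/
def opN (ξ : Fin d → ℝ) (t : ℕ) : ℕ → ℕ → Fin d → ℝ :=
  fun i s => if i = t ∧ s = t then ξ else 0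

variable (S : ℕ → Fin d → ℝ) (r : ℕ → ℝ) (α : ℝ) (ξ : Fin d → ℝ) (t : ℕ)

lemma Gaux_congr (N : ℕ → ℕ → Fin d → ℝ) (e1 e2 : ℕ → ℝ) (v : ℕ)
    (h : ∀ w, w < v → e1 w = e2 w) : Gaux S r N e1 v = Gaux S r N e2 v := by
  unfold Gaux
  refine Finset.sum_congr rfl fun u hu => ?_
  have hu' := Finset.mem_Icc.mp hu
  rw [h (u - 1) (by omega)]

lemma Gaux_succ (N : ℕ → ℕ → Fin d → ℝ) (e : ℕ → ℝ) (u : ℕ) :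
    Gaux S r N e (u + 1) = Gaux S r N e u
      + (e u * r (u + 1) + ∑ i ∈ Finset.range (u + 1),
          dotp (fun j => N i u j - N i (u + 1) j) (fun j => S (u + 1) j - S i j)) := by
  unfold Gaux
  rw [Finset.sum_Icc_succ_top (by omega : 1 ≤ u + 1)]
  simp

lemma Piaux_eta (N : ℕ → ℕ → Fin d → ℝ) (x : ℝ) (u s : ℕ) (hs : s ≤ u + 1) :
    Piaux α S r N (etaHist α x S r N u) s
      = α * (Finset.range (s + 1)).sup' Finset.nonempty_range_add_one
          (fun v => Gaux S r N (fun w => etaHist α x S r N w w) v) := by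
  unfold Piaux
  congr 1
  refine Finset.sup'_congr _ rfl fun v hv => ?_
  have hv' := Finset.mem_range.mp hv
  refine Gaux_congr S r N _ _ v fun w hw => ?_
  exact etaHist_stable S r N α x u w (by omega)

lemma sup'_range_succ_zero (f : ℕ → ℝ) (n : ℕ) (h : ∀ v, v ≤ n → f v = 0) :
    (Finset.range (n + 1)).sup' Finset.nonempty_range_add_one f = 0 := by
  rw [Finset.sup'_congr Finset.nonempty_range_add_one rfl
    (fun v hv => h v (Nat.lt_succ_iff.mp (Finset.mem_range.mp hv)))]
  exact Finset.sup'_const _ _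

lemma opN_ne (i s : ℕ) (h : ¬(i = t ∧ s = t)) : opN ξ t i s = 0 := if_neg h

lemma opN_self : opN ξ t t t = ξ := if_pos ⟨rfl, rfl⟩

lemma opN_eta_of_lt : ∀ s, s < t → etaHist α 0 S r (opN ξ t) s s = 0 := by
  intro s
  induction s using Nat.strong_induction_on with
  | _ s ih =>
  intro hst
  cases s with
  | zero =>
    show (0 : ℝ) - dotp (fun j => opN ξ t 0 0 j) (fun j => S 0 j) = 0
    rw [opN_ne ξ t 0 0 (by omega)]
    simp [dotp]
  | succ s =>
    rw [etaHist_succ, if_neg (by omega)]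
    have hes : etaHist α 0 S r (opN ξ t) s s = 0 := ih s (by omega) (by omega)
    have hG : ∀ v, v ≤ s + 1 →
        Gaux S r (opN ξ t) (fun w => etaHist α 0 S r (opN ξ t) w w) v = 0 := by
      intro v hv
      unfold Gaux
      refine Finset.sum_eq_zero fun u hu => ?_
      have hu' := Finset.mem_Icc.mp hu
      have he : etaHist α 0 S r (opN ξ t) (u - 1) (u - 1) = 0 := ih (u - 1) (by omega) (by omega)
      have htr : ∀ i ∈ Finset.range u,
          dotp (fun j => opN ξ t i (u - 1) j - opN ξ t i u j) (fun j => S u j - S i j) = 0 := by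
        intro i hi
        have hi' := Finset.mem_range.mp hi
        rw [opN_ne ξ t i (u - 1) (by omega), opN_ne ξ t i u (by omega)]
        simp [dotp]
      simp only [he, Finset.sum_eq_zero htr]
      ring
    have hP1 : Piaux α S r (opN ξ t) (etaHist α 0 S r (opN ξ t) s) (s + 1) = α * 0 := by
      rw [Piaux_eta S r α (opN ξ t) 0 s (s + 1) (le_refl _)]
      rw [sup'_range_succ_zero _ _ (fun v hv => hG v hv)]
    have hP0 : Piaux α S r (opN ξ t) (etaHist α 0 S r (opN ξ t) s) s = α * 0 := by
      rw [Piaux_eta S r α (opN ξ t) 0 s s (by omega)]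
      rw [sup'_range_succ_zero _ _ (fun v hv => hG v (by omega))]
    have htr : (fun j => (∑ i ∈ Finset.range (s + 1), (opN ξ t i s j - opN ξ t i (s + 1) j))
        - opN ξ t (s + 1) (s + 1) j) = fun _ => (0 : ℝ) := by
      funext j
      rw [opN_ne ξ t (s + 1) (s + 1) (by omega)]
      rw [Finset.sum_eq_zero (fun i hi => by
        have hi' := Finset.mem_range.mp hi
        rw [opN_ne ξ t i s (by omega), opN_ne ξ t i (s + 1) (by omega)]
        simp)]
      simp
    rw [hes, hP1, hP0, htr]
    simp [dotp]

lemma opN_G_of_le (v : ℕ) (hv : v ≤ t) :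
    Gaux S r (opN ξ t) (fun w => etaHist α 0 S r (opN ξ t) w w) v = 0 := by
  unfold Gaux
  refine Finset.sum_eq_zero fun u hu => ?_
  have hu' := Finset.mem_Icc.mp hu
  have he : etaHist α 0 S r (opN ξ t) (u - 1) (u - 1) = 0 :=
    opN_eta_of_lt S r α ξ t (u - 1) (by omega)
  have htr : ∀ i ∈ Finset.range u,
      dotp (fun j => opN ξ t i (u - 1) j - opN ξ t i u j) (fun j => S u j - S i j) = 0 := by
    intro i hi
    have hi' := Finset.mem_range.mp hi
    rw [opN_ne ξ t i (u - 1) (by omega), opN_ne ξ t i u (by omega)]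
    simp [dotp]
  simp only [he, Finset.sum_eq_zero htr]
  ring

lemma opN_eta_t : etaHist α 0 S r (opN ξ t) t t = -dotp ξ (fun j => S t j) := by
  cases t with
  | zero =>
    show (0 : ℝ) - dotp (fun j => opN ξ 0 0 0 j) (fun j => S 0 j) = _
    rw [show (fun j => opN ξ 0 0 0 j) = ξ from funext fun j => by rw [opN_self]]
    ring
  | succ s =>
    rw [etaHist_succ, if_neg (by omega)]
    have hes : etaHist α 0 S r (opN ξ (s + 1)) s s = 0 :=
      opN_eta_of_lt S r α ξ (s + 1) s (by omega)
    have hP1 : Piaux α S r (opN ξ (s + 1)) (etaHist α 0 S r (opN ξ (s + 1)) s) (s + 1)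
        = α * 0 := by
      rw [Piaux_eta S r α (opN ξ (s + 1)) 0 s (s + 1) (le_refl _)]
      rw [sup'_range_succ_zero _ _ (fun v hv => opN_G_of_le S r α ξ (s + 1) v (by omega))]
    have hP0 : Piaux α S r (opN ξ (s + 1)) (etaHist α 0 S r (opN ξ (s + 1)) s) s = α * 0 := by
      rw [Piaux_eta S r α (opN ξ (s + 1)) 0 s s (by omega)]
      rw [sup'_range_succ_zero _ _ (fun v hv => opN_G_of_le S r α ξ (s + 1) v (by omega))]
    have htr : (fun j => (∑ i ∈ Finset.range (s + 1),
          (opN ξ (s + 1) i s j - opN ξ (s + 1) i (s + 1) j))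
        - opN ξ (s + 1) (s + 1) (s + 1) j) = fun j => -ξ j := by
      funext j
      rw [opN_self]
      rw [Finset.sum_eq_zero (fun i hi => by
        have hi' := Finset.mem_range.mp hi
        rw [opN_ne ξ (s + 1) i s (by omega), opN_ne ξ (s + 1) i (s + 1) (by omega)]
        simp)]
      ring
    rw [hes, hP1, hP0, htr]
    simp [dotp, Finset.sum_neg_distrib]


lemma dotp_g_expand :
    dotp ξ (fun j => S (t + 1) j - (1 + r (t + 1)) * S t j)
      = dotp ξ (fun j => S (t + 1) j) - (1 + r (t + 1)) * dotp ξ (fun j => S t j) := by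
  unfold dotp
  rw [Finset.mul_sum, ← Finset.sum_sub_distrib]
  exact Finset.sum_congr rfl fun j _ => by ring

lemma opN_G_succ_t :
    Gaux S r (opN ξ t) (fun w => etaHist α 0 S r (opN ξ t) w w) (t + 1)
      = dotp ξ (fun j => S (t + 1) j - (1 + r (t + 1)) * S t j) := by
  rw [Gaux_succ, opN_G_of_le S r α ξ t t (le_refl _)]
  have hsum : (∑ i ∈ Finset.range (t + 1),
      dotp (fun j => opN ξ t i t j - opN ξ t i (t + 1) j) (fun j => S (t + 1) j - S i j))
      = dotp (fun j => ξ j) (fun j => S (t + 1) j - S t j) := by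
    rw [Finset.sum_eq_single_of_mem t (Finset.self_mem_range_succ t)]
    · congr 1
      funext j
      rw [opN_self, opN_ne ξ t t (t + 1) (by omega)]
      simp
    · intro i hi hne
      rw [opN_ne ξ t i t (fun h => hne h.1), opN_ne ξ t i (t + 1) (by omega)]
      simp [dotp]
  have e1 : dotp (fun j => ξ j) (fun j => S (t + 1) j - S t j)
      = dotp ξ (fun j => S (t + 1) j) - dotp ξ (fun j => S t j) := by
    unfold dotp
    rw [← Finset.sum_sub_distrib]
    exact Finset.sum_congr rfl fun j _ => by ring
  simp only [opN_eta_t S r α ξ t, hsum, e1, dotp_g_expand S r ξ t]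
  ring

lemma opN_eta_ge (hα0 : 0 ≤ α) (hα1 : α ≤ 1) (hr : ∀ u, 0 ≤ r u)
    (hg : 0 ≤ dotp ξ (fun j => S (t + 1) j - (1 + r (t + 1)) * S t j)) :
    ∀ u, t + 1 ≤ u →
      ((1 - α) * dotp ξ (fun j => S (t + 1) j - (1 + r (t + 1)) * S t j)
          ≤ etaHist α 0 S r (opN ξ t) u u)
        ∧ (Finset.range (u + 1)).sup' Finset.nonempty_range_add_one
            (fun v => Gaux S r (opN ξ t) (fun w => etaHist α 0 S r (opN ξ t) w w) v)
          = Gaux S r (opN ξ t) (fun w => etaHist α 0 S r (opN ξ t) w w) u := by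
  intro u
  induction u with
  | zero => omega
  | succ u ih =>
    intro hu
    by_cases hc : t + 1 ≤ u
    · -- inductive step, u ≥ t + 1
      obtain ⟨ih1, ih2⟩ := ih hc
      have h0 : 0 ≤ etaHist α 0 S r (opN ξ t) u u :=
        le_trans (mul_nonneg (by linarith) hg) ih1
      have hGsucc : Gaux S r (opN ξ t) (fun w => etaHist α 0 S r (opN ξ t) w w) (u + 1)
          = Gaux S r (opN ξ t) (fun w => etaHist α 0 S r (opN ξ t) w w) u
            + etaHist α 0 S r (opN ξ t) u u * r (u + 1) := by
        rw [Gaux_succ]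
        have htr : ∀ i ∈ Finset.range (u + 1),
            dotp (fun j => opN ξ t i u j - opN ξ t i (u + 1) j)
              (fun j => S (u + 1) j - S i j) = 0 := by
          intro i hi
          rw [opN_ne ξ t i u (by omega), opN_ne ξ t i (u + 1) (by omega)]
          simp [dotp]
        rw [Finset.sum_eq_zero htr]
        simp
      have hGmono : Gaux S r (opN ξ t) (fun w => etaHist α 0 S r (opN ξ t) w w) u
          ≤ Gaux S r (opN ξ t) (fun w => etaHist α 0 S r (opN ξ t) w w) (u + 1) := by
        rw [hGsucc]
        have := mul_nonneg h0 (hr (u + 1))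
        linarith
      have hM : (Finset.range (u + 1 + 1)).sup' Finset.nonempty_range_add_one
          (fun v => Gaux S r (opN ξ t) (fun w => etaHist α 0 S r (opN ξ t) w w) v)
          = Gaux S r (opN ξ t) (fun w => etaHist α 0 S r (opN ξ t) w w) (u + 1) := by
        apply le_antisymm
        · apply Finset.sup'_le
          intro v hv
          have hv' := Finset.mem_range.mp hv
          by_cases hvu : v ≤ u
          · calc Gaux S r (opN ξ t) (fun w => etaHist α 0 S r (opN ξ t) w w) v
                ≤ (Finset.range (u + 1)).sup' Finset.nonempty_range_add_one
                  (fun v => Gaux S r (opN ξ t) (fun w => etaHist α 0 S r (opN ξ t) w w) v) :=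
                  Finset.le_sup' _ (Finset.mem_range.mpr (by omega))
              _ = _ := ih2
              _ ≤ _ := hGmono
          · have : v = u + 1 := by omega
            subst this
            exact le_refl _
        · exact Finset.le_sup' _ (Finset.self_mem_range_succ (u + 1))
      constructor
      · rw [etaHist_succ, if_neg (by omega)]
        have hp1 : Piaux α S r (opN ξ t) (etaHist α 0 S r (opN ξ t) u) (u + 1)
            = α * Gaux S r (opN ξ t) (fun w => etaHist α 0 S r (opN ξ t) w w) (u + 1) := by
          rw [Piaux_eta S r α (opN ξ t) 0 u (u + 1) (le_refl _), hM]
        have hp0 : Piaux α S r (opN ξ t) (etaHist α 0 S r (opN ξ t) u) u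
            = α * Gaux S r (opN ξ t) (fun w => etaHist α 0 S r (opN ξ t) w w) u := by
          rw [Piaux_eta S r α (opN ξ t) 0 u u (by omega), ih2]
        have htr : (fun j => (∑ i ∈ Finset.range (u + 1),
              (opN ξ t i u j - opN ξ t i (u + 1) j)) - opN ξ t (u + 1) (u + 1) j)
            = fun _ => (0 : ℝ) := by
          funext j
          rw [opN_ne ξ t (u + 1) (u + 1) (by omega)]
          rw [Finset.sum_eq_zero (fun i hi => by
            rw [opN_ne ξ t i u (by omega), opN_ne ξ t i (u + 1) (by omega)]
            simp)]
          simp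
        rw [hp1, hp0, htr, hGsucc]
        have hd0 : dotp (fun _ => (0 : ℝ)) (fun j => S (u + 1) j) = 0 := by simp [dotp]
        rw [hd0]
        have hpos : 0 ≤ (1 - α) * (r (u + 1) * etaHist α 0 S r (opN ξ t) u u) :=
          mul_nonneg (by linarith) (mul_nonneg (hr (u + 1)) h0)
        linarith
      · exact hM
    · -- base case: u = t
      have hut : u = t := by omega
      subst hut
      have hGt1 := opN_G_succ_t S r α ξ u
      have hM : (Finset.range (u + 1 + 1)).sup' Finset.nonempty_range_add_one
          (fun v => Gaux S r (opN ξ u) (fun w => etaHist α 0 S r (opN ξ u) w w) v)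
          = Gaux S r (opN ξ u) (fun w => etaHist α 0 S r (opN ξ u) w w) (u + 1) := by
        apply le_antisymm
        · apply Finset.sup'_le
          intro v hv
          have hv' := Finset.mem_range.mp hv
          by_cases hvu : v ≤ u
          · rw [opN_G_of_le S r α ξ u v hvu, hGt1]
            exact hg
          · have : v = u + 1 := by omega
            subst this
            exact le_refl _
        · exact Finset.le_sup' _ (Finset.self_mem_range_succ (u + 1))
      refine ⟨?_, hM⟩
      rw [etaHist_succ, if_neg (by omega)]
      have hp1 : Piaux α S r (opN ξ u) (etaHist α 0 S r (opN ξ u) u) (u + 1)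
          = α * dotp ξ (fun j => S (u + 1) j - (1 + r (u + 1)) * S u j) := by
        rw [Piaux_eta S r α (opN ξ u) 0 u (u + 1) (le_refl _), hM, hGt1]
      have hp0 : Piaux α S r (opN ξ u) (etaHist α 0 S r (opN ξ u) u) u = α * 0 := by
        rw [Piaux_eta S r α (opN ξ u) 0 u u (by omega)]
        rw [sup'_range_succ_zero _ _ (fun v hv => opN_G_of_le S r α ξ u v hv)]
      have htr : (fun j => (∑ i ∈ Finset.range (u + 1),
            (opN ξ u i u j - opN ξ u i (u + 1) j)) - opN ξ u (u + 1) (u + 1) j)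
          = fun j => ξ j := by
        funext j
        rw [opN_ne ξ u (u + 1) (u + 1) (by omega)]
        rw [Finset.sum_eq_single_of_mem u (Finset.self_mem_range_succ u)]
        · rw [opN_self, opN_ne ξ u u (u + 1) (by omega)]
          simp
        · intro i hi hne
          rw [opN_ne ξ u i u (fun h => hne h.1), opN_ne ξ u i (u + 1) (by omega)]
          simp
      rw [hp1, hp0, htr]
      simp only [opN_eta_t S r α ξ u]
      have hexp := dotp_g_expand S r ξ u
      have : dotp (fun j => ξ j) (fun j => S (u + 1) j) = dotp ξ (fun j => S (u + 1) j) := rfl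
      rw [this, hexp]
      have : (0 : ℝ) ≤ 0 := le_refl 0
      nlinarith [hexp]

end OnePeriod



section MainAux

variable {Ω : Type*} [m0 : MeasurableSpace Ω] {T d : ℕ}

/-- If the taxed model satisfies NA, then any nonnegative adapted one-period position with
a.s. nonnegative discounted gain has a.s. zero gain. -/
lemma arb_from_oneperiod (M : Market Ω T d) (α : ℝ) (hα0 : 0 ≤ α) (hα1 : α < 1)
    (hNA : M.NA α) (t : ℕ) (ht : t + 1 ≤ T) (ξ : Ω → Fin d → ℝ)
    (hmeas : Measurable[M.F t] ξ) (hnn : ∀ ω j, 0 ≤ ξ ω j)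
    (hgae : ∀ᵐ ω ∂M.P, 0 ≤ dotp (ξ ω)
      (fun j => M.S (t + 1) ω j - (1 + M.r (t + 1) ω) * M.S t ω j)) :
    ∀ᵐ ω ∂M.P, dotp (ξ ω)
      (fun j => M.S (t + 1) ω j - (1 + M.r (t + 1) ω) * M.S t ω j) = 0 := by
  set N' : ℕ → ℕ → Ω → Fin d → ℝ := fun i s ω => opN (ξ ω) t i s with hN'
  have hstrat : M.IsStrategy N' := by
    refine ⟨?_, ?_, ?_, ?_, ?_⟩
    · intro i s
      by_cases h : i = t ∧ s = t
      · have he : N' i s = fun ω => ξ ω := by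
          funext ω
          show opN (ξ ω) t i s = ξ ω
          rw [h.1, h.2]
          exact opN_self (ξ ω) t
        rw [he, h.2]
        exact hmeas
      · have : N' i s = fun _ => (0 : Fin d → ℝ) := by
          funext ω
          exact opN_ne (ξ ω) t i s h
        rw [this]
        exact measurable_const
    · intro i s ω j
      by_cases h : i = t ∧ s = t
      · rw [show N' i s ω = ξ ω from by
          show opN (ξ ω) t i s = ξ ω
          rw [h.1, h.2]
          exact opN_self (ξ ω) t]
        exact hnn ω j
      · rw [show N' i s ω = 0 from opN_ne (ξ ω) t i s h]
        exact le_refl _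
    · intro i s his hsT ω j
      have h1 : N' i (s + 1) ω = 0 := by
        apply opN_ne
        rintro ⟨rfl, h2⟩
        omega
      rw [h1]
      by_cases h : i = t ∧ s = t
      · rw [show N' i s ω = ξ ω from by
          show opN (ξ ω) t i s = ξ ω
          rw [h.1, h.2]
          exact opN_self (ξ ω) t]
        exact hnn ω j
      · rw [show N' i s ω = 0 from opN_ne (ξ ω) t i s h]
    · intro i ω j
      rw [show N' i T ω = 0 from opN_ne (ξ ω) t i T (by rintro ⟨rfl, h2⟩; omega)]
      rfl
    · intro i s hsi ω j
      rw [show N' i s ω = 0 from opN_ne (ξ ω) t i s (by rintro ⟨rfl, rfl⟩; omega)]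
      rfl
  have hV : ∀ᵐ ω ∂M.P, (1 - α) * dotp (ξ ω)
      (fun j => M.S (t + 1) ω j - (1 + M.r (t + 1) ω) * M.S t ω j) ≤ M.V α 0 N' ω := by
    filter_upwards [hgae] with ω hω
    exact (opN_eta_ge (fun u => M.S u ω) (fun u => M.r u ω) α (ξ ω) t hα0 (le_of_lt hα1)
      (fun u => M.r_nonneg u ω) hω T ht).1
  have hVnn : ∀ᵐ ω ∂M.P, 0 ≤ M.V α 0 N' ω := by
    filter_upwards [hV, hgae] with ω h1 h2
    exact le_trans (mul_nonneg (by linarith) h2) h1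
  have hV0 := hNA N' hstrat hVnn
  filter_upwards [hV, hV0, hgae] with ω h1 h2 h3
  rw [h2] at h1
  nlinarith

end MainAux

/-- The model with tax rate `α ∈ [0,1)` satisfies the no-arbitrage condition
if and only if the corresponding tax-free model (`α = 0`) does. -/
theorem NA_iff_NA_taxfree
    (M : Market Ω T d) (α : ℝ) (hα0 : 0 ≤ α) (hα1 : α < 1) :
    M.NA α ↔ M.NA 0 := by
  constructor
  · -- NA with taxes implies tax-free NA
    intro hNA N hN hge
    by_contra hne
    set W : ℕ → Ω → ℝ := fun u ω =>
      w0aux (fun v => M.S v ω) (fun v => M.r v ω) (fun i v => N i v ω) u with hWdef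
    have hWT : ∀ ω, W T ω = M.V 0 0 N ω := by
      intro ω
      exact w0aux_eq_eta (fun v => M.S v ω) (fun v => M.r v ω) (fun i v => N i v ω) T
        (fun j => hN.2.2.2.1 T ω j) (fun i j _ => hN.2.2.2.1 i ω j)
    have hW0 : ∀ ω, W 0 ω = 0 := fun ω =>
      w0aux_zero (fun v => M.S v ω) (fun v => M.r v ω) (fun i v => N i v ω)
    have hWrec : ∀ u ω, W (u + 1) ω = (1 + M.r (u + 1) ω) * W u ω
        + dotp (fun j => ∑ i ∈ Finset.range (u + 1), N i u ω j)
            (fun j => M.S (u + 1) ω j - (1 + M.r (u + 1) ω) * M.S u ω j) := fun u ω =>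
      w0aux_succ (fun v => M.S v ω) (fun v => M.r v ω) (fun i v => N i v ω) u
    have hQT : ∀ᵐ ω ∂M.P, 0 ≤ W T ω := by
      filter_upwards [hge] with ω h
      rw [hWT ω]
      exact h
    by_cases hall : ∀ u, u ≤ T → ∀ᵐ ω ∂M.P, 0 ≤ W u ω
    · -- Case A : wealth is a.s. nonnegative at all times
      have hexT : ¬ (∀ᵐ ω ∂M.P, W T ω = 0) := by
        intro h
        apply hne
        filter_upwards [h] with ω hω
        rw [← hWT ω]
        exact hω
      have hex : ∃ u, ¬ (∀ᵐ ω ∂M.P, W u ω = 0) := ⟨T, hexT⟩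
      have hspec : ¬ (∀ᵐ ω ∂M.P, W (Nat.find hex) ω = 0) := Nat.find_spec hex
      have ht1T : Nat.find hex ≤ T := Nat.find_min' hex hexT
      have ht1pos : 0 < Nat.find hex := by
        rcases Nat.eq_zero_or_pos (Nat.find hex) with h | h
        · exfalso
          apply hspec
          rw [h]
          exact Filter.Eventually.of_forall hW0
        · exact h
      set t : ℕ := Nat.find hex - 1 with htdef
      have htT : t + 1 ≤ T := by omega
      have ht1eq : t + 1 = Nat.find hex := by omega
      have hprev : ∀ᵐ ω ∂M.P, W t ω = 0 := not_not.mp (Nat.find_min hex (by omega))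
      have hnext : ∀ᵐ ω ∂M.P, 0 ≤ W (t + 1) ω := by
        rw [ht1eq]
        exact hall (Nat.find hex) ht1T
      have hmeas : Measurable[M.F t] (fun ω j => ∑ i ∈ Finset.range (t + 1), N i t ω j) := by
        have h : ∀ j : Fin d, Measurable[M.F t] (fun ω => ∑ i ∈ Finset.range (t + 1), N i t ω j) :=
          fun j => Finset.measurable_sum _ fun i _ => (measurable_pi_apply j).comp (hN.1 i t)
        exact @measurable_pi_lambda Ω (Fin d) (fun _ => ℝ) (M.F t) (fun _ => inferInstance) _ h
      have hnn : ∀ (ω : Ω) (j : Fin d),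
          0 ≤ (fun ω j => ∑ i ∈ Finset.range (t + 1), N i t ω j) ω j := fun ω j =>
        Finset.sum_nonneg fun i _ => hN.2.1 i t ω j
      have hgW : ∀ ω, dotp (fun j => ∑ i ∈ Finset.range (t + 1), N i t ω j)
          (fun j => M.S (t + 1) ω j - (1 + M.r (t + 1) ω) * M.S t ω j)
          = W (t + 1) ω - (1 + M.r (t + 1) ω) * W t ω := by
        intro ω
        have := hWrec t ω
        linarith
      have hgae : ∀ᵐ ω ∂M.P, 0 ≤ dotp (fun j => ∑ i ∈ Finset.range (t + 1), N i t ω j)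
          (fun j => M.S (t + 1) ω j - (1 + M.r (t + 1) ω) * M.S t ω j) := by
        filter_upwards [hprev, hnext] with ω h1 h2
        rw [hgW ω, h1, mul_zero, sub_zero]
        exact h2
      have hgz := arb_from_oneperiod M α hα0 hα1 hNA t htT
        (fun ω j => ∑ i ∈ Finset.range (t + 1), N i t ω j) hmeas hnn hgae
      apply hspec
      rw [← ht1eq]
      filter_upwards [hgz, hprev] with ω h1 h2
      have h3 := hgW ω
      rw [h1, h2, mul_zero, sub_zero] at h3
      exact h3.symm
    · -- Case B : wealth goes strictly negative with positive probability at some time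
      push_neg at hall
      obtain ⟨u0, hu0T, hu0⟩ := hall
      obtain ⟨t, htdef⟩ : ∃ t, t = Nat.findGreatest (fun u => ¬ ∀ᵐ ω ∂M.P, 0 ≤ W u ω) T :=
        ⟨_, rfl⟩
      have hspec : ¬ ∀ᵐ ω ∂M.P, 0 ≤ W t ω := by
        have h := Nat.findGreatest_spec (P := fun u => ¬ ∀ᵐ ω ∂M.P, 0 ≤ W u ω) hu0T
          (Filter.not_eventually.mpr (hu0.mono fun ω h => not_le.mpr h))
        rw [← htdef] at h
        exact h
      have htT' : t ≤ T := by
        have h := Nat.findGreatest_le (P := fun u => ¬ ∀ᵐ ω ∂M.P, 0 ≤ W u ω) T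
        rw [← htdef] at h
        exact h
      have htneT : t ≠ T := fun h => hspec (h ▸ hQT)
      have htT : t + 1 ≤ T := by omega
      have hQt1 : ∀ᵐ ω ∂M.P, 0 ≤ W (t + 1) ω := by
        have hgr := Nat.findGreatest_is_greatest
          (P := fun u => ¬ ∀ᵐ ω ∂M.P, 0 ≤ W u ω) (n := T) (k := t + 1)
          (by rw [← htdef]; omega) htT
        exact not_not.mp hgr
      have hmeasW : Measurable[M.F t] (W t) := w0_measurable M N hN t
      have hmeas : Measurable[M.F t] (fun ω =>
          if W t ω < 0 then (fun j => ∑ i ∈ Finset.range (t + 1), N i t ω j)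
          else (0 : Fin d → ℝ)) := by
        apply Measurable.ite (measurableSet_lt hmeasW measurable_const)
        · have h : ∀ j : Fin d, Measurable[M.F t]
              (fun ω => ∑ i ∈ Finset.range (t + 1), N i t ω j) :=
            fun j => Finset.measurable_sum _ fun i _ => (measurable_pi_apply j).comp (hN.1 i t)
          exact @measurable_pi_lambda Ω (Fin d) (fun _ => ℝ) (M.F t) (fun _ => inferInstance) _ h
        · exact measurable_const
      have hnn : ∀ (ω : Ω) (j : Fin d), 0 ≤ (fun ω =>
          if W t ω < 0 then (fun j => ∑ i ∈ Finset.range (t + 1), N i t ω j)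
          else (0 : Fin d → ℝ)) ω j := by
        intro ω j
        by_cases h : W t ω < 0
        · simp only [if_pos h]
          exact Finset.sum_nonneg fun i _ => hN.2.1 i t ω j
        · simp only [if_neg h]
          exact le_refl _
      have hgval : ∀ ω, dotp ((fun ω =>
          if W t ω < 0 then (fun j => ∑ i ∈ Finset.range (t + 1), N i t ω j)
          else (0 : Fin d → ℝ)) ω)
          (fun j => M.S (t + 1) ω j - (1 + M.r (t + 1) ω) * M.S t ω j)
          = if W t ω < 0 then W (t + 1) ω - (1 + M.r (t + 1) ω) * W t ω else 0 := by
        intro ω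
        by_cases h : W t ω < 0
        · simp only [if_pos h]
          have := hWrec t ω
          linarith
        · simp only [if_neg h]
          simp [dotp]
      have hgae : ∀ᵐ ω ∂M.P, 0 ≤ dotp ((fun ω =>
          if W t ω < 0 then (fun j => ∑ i ∈ Finset.range (t + 1), N i t ω j)
          else (0 : Fin d → ℝ)) ω)
          (fun j => M.S (t + 1) ω j - (1 + M.r (t + 1) ω) * M.S t ω j) := by
        filter_upwards [hQt1] with ω h1
        rw [hgval ω]
        by_cases h : W t ω < 0
        · rw [if_pos h]
          have hr : M.r (t + 1) ω * W t ω ≤ 0 :=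
            mul_nonpos_of_nonneg_of_nonpos (M.r_nonneg (t + 1) ω) (le_of_lt h)
          nlinarith
        · rw [if_neg h]
      have hgz := arb_from_oneperiod M α hα0 hα1 hNA t htT
        (fun ω => if W t ω < 0 then (fun j => ∑ i ∈ Finset.range (t + 1), N i t ω j)
          else (0 : Fin d → ℝ)) hmeas hnn hgae
      apply hspec
      filter_upwards [hgz, hQt1] with ω h1 h2
      by_contra hc
      push_neg at hc
      have h3 := hgval ω
      rw [h1] at h3
      rw [if_pos hc] at h3
      have hr : M.r (t + 1) ω * W t ω ≤ 0 :=
        mul_nonpos_of_nonneg_of_nonpos (M.r_nonneg (t + 1) ω) (le_of_lt hc)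
      nlinarith
  · -- tax-free NA implies NA with taxes
    intro hNA N hN hge
    have hle : ∀ ω, M.V α 0 N ω ≤ M.V 0 0 N ω := fun ω =>
      eta_le_eta0 (fun u => M.S u ω) (fun u => M.r u ω) (fun i u => N i u ω) α 0 hα0
        (fun u => M.r_nonneg u ω) T
    have h0 : ∀ᵐ ω ∂M.P, 0 ≤ M.V 0 0 N ω := hge.mono fun ω h => le_trans h (hle ω)
    have hz := hNA N hN h0
    filter_upwards [hge, hz] with ω h1 h2
    exact le_antisymm (le_of_le_of_eq (hle ω) h2) h1

end
end

section
/- Suppose the stock prices are nonnegative and there is r̄ ∈ ℝ_+ with max_{t=1,…,T} r_t ≤ r̄ a.s. Let x ∈ ℝ and define, for N ∈ 𝒩, L_t(N) := ((−x) ∨ 0 + Σ_{s=0}^{t−1} ⟨q_s(Σ_{i=0}^s N_{i,s}), S_s⟩)·(1+r̄)^T. Then: (i) for every {0,…,T}-valued stopping time τ and the stopped strategy N^{(τ)} defined by N^{(τ)}_{i,t} := N_{i,t}·1_{{τ > t}}, one has L_t(N^{(τ)}) = L_{t∧τ}(N) for t = 0,…,T; and (ii) for every N ∈ 𝒩 that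 realizes losses (i.e. {S^j_i > S^j_t} ⊆ {N_{i,t,j} = 0} a.s. for all i < t ≤ T, j = 1,…,d), one has V^α(x,N) ≥ −L_T(N) almost surely. -/
open MeasureTheory Filter Finset

noncomputable section
open scoped Classical

variable {Ω : Type*} [m0 : MeasurableSpace Ω] {T d : ℕ}

variable {Ω : Type*} [m0 : MeasurableSpace Ω] {T d : ℕ}

namespace LB

lemma dotp_zero_left {d : ℕ} (b : Fin d → ℝ) : dotp (fun _ => (0:ℝ)) b = 0 := by
  simp [dotp]

lemma dotp_nonneg {d : ℕ} {a b : Fin d → ℝ} (ha : ∀ j, 0 ≤ a j) (hb : ∀ j, 0 ≤ b j) :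
    0 ≤ dotp a b :=
  Finset.sum_nonneg fun j _ => mul_nonneg (ha j) (hb j)

lemma dotp_sub_left {d : ℕ} (a b c : Fin d → ℝ) :
    dotp (fun j => a j - b j) c = dotp a c - dotp b c := by
  simp [dotp, sub_mul, Finset.sum_sub_distrib]

lemma dotp_right_split {d : ℕ} (a b c : Fin d → ℝ) (k : ℝ) :
    dotp a (fun j => b j - k * c j) = dotp a b - k * dotp a c := by
  unfold dotp
  rw [Finset.mul_sum, ← Finset.sum_sub_distrib]
  exact Finset.sum_congr rfl fun j _ => by ring

section Det

variable {d : ℕ} (α x : ℝ) (S : ℕ → Fin d → ℝ) (r : ℕ → ℝ) (N : ℕ → ℕ → Fin d → ℝ)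

/-- `η_t`. -/
def eta (t : ℕ) : ℝ := etaHist α x S r N t t

/-- total holdings after trading at `t`. -/
def betaT (t : ℕ) : Fin d → ℝ := fun j => ∑ i ∈ Finset.range (t+1), N i t j

/-- realized gains. -/
def GG (t : ℕ) : ℝ := Gaux S r N (eta α x S r N) t

/-- tax payments. -/
def PiP (t : ℕ) : ℝ :=
  α * (Finset.range (t + 1)).sup' Finset.nonempty_range_add_one (GG α x S r N)

/-- pre-liquidation wealth. -/
def WW (t : ℕ) : ℝ := eta α x S r N t + dotp (betaT N t) (S t)

/-- unrealized (book) gains. -/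
def UU (t : ℕ) : ℝ :=
  ∑ i ∈ Finset.range (t+1), dotp (N i t) (fun j => S t j - S i j)

lemma etaHist_succ (t s : ℕ) :
    etaHist α x S r N (t+1) s =
      if s ≤ t then etaHist α x S r N t s
      else
        etaHist α x S r N t t + r (t + 1) * etaHist α x S r N t t
          + dotp
              (fun j => (∑ i ∈ Finset.range (t + 1), (N i t j - N i (t + 1) j))
                - N (t + 1) (t + 1) j)
              (fun j => S (t + 1) j)
          - (Piaux α S r N (etaHist α x S r N t) (t + 1)
              - Piaux α S r N (etaHist α x S r N t) t) := rfl

lemma etaHist_stable : ∀ t s, s ≤ t → etaHist α x S r N t s = eta α x S r N s := by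
  intro t
  induction t with
  | zero => intro s hs; obtain rfl := Nat.le_zero.mp hs; rfl
  | succ t ih =>
    intro s hs
    by_cases h : s ≤ t
    · rw [etaHist_succ, if_pos h]; exact ih s h
    · obtain rfl : s = t + 1 := by omega
      rfl

lemma Gaux_congr {e e' : ℕ → ℝ} (u : ℕ) (h : ∀ v, v < u → e v = e' v) :
    Gaux S r N e u = Gaux S r N e' u := by
  unfold Gaux
  refine Finset.sum_congr rfl fun u' hu' => ?_
  obtain ⟨h1, h2⟩ := Finset.mem_Icc.mp hu'
  rw [h (u' - 1) (by omega)]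

lemma Piaux_eta (t u : ℕ) (hu : u ≤ t + 1) :
    Piaux α S r N (etaHist α x S r N t) u = PiP α x S r N u := by
  unfold Piaux PiP
  congr 1
  refine Finset.sup'_congr _ rfl fun v hv => ?_
  refine Gaux_congr S r N v fun w hw => ?_
  have hv' := Finset.mem_range.mp hv
  exact etaHist_stable α x S r N t w (by omega)

lemma eta_succ (t : ℕ) :
    eta α x S r N (t+1) = eta α x S r N t + r (t + 1) * eta α x S r N t
      + dotp
          (fun j => (∑ i ∈ Finset.range (t + 1), (N i t j - N i (t + 1) j))
            - N (t + 1) (t + 1) j)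
          (fun j => S (t + 1) j)
      - (PiP α x S r N (t + 1) - PiP α x S r N t) := by
  show etaHist α x S r N (t+1) (t+1) = _
  rw [etaHist_succ, if_neg (by omega), Piaux_eta α x S r N t (t+1) le_rfl,
    Piaux_eta α x S r N t t (by omega)]
  rfl

lemma WW_succ (t : ℕ) :
    WW α x S r N (t+1) = (1 + r (t+1)) * WW α x S r N t
      + dotp (betaT N t) (fun j => S (t+1) j - (1 + r (t+1)) * S t j)
      - (PiP α x S r N (t+1) - PiP α x S r N t) := by
  have e1 : dotp
      (fun j => (∑ i ∈ Finset.range (t + 1), (N i t j - N i (t + 1) j))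
        - N (t + 1) (t + 1) j)
      (fun j => S (t + 1) j)
      = dotp (betaT N t) (S (t+1)) - dotp (betaT N (t+1)) (S (t+1)) := by
    unfold dotp betaT
    rw [← Finset.sum_sub_distrib]
    refine Finset.sum_congr rfl fun j _ => ?_
    rw [Finset.sum_range_succ (fun i => N i (t+1) j) (t+1)]
    simp only [Finset.sum_sub_distrib]
    ring
  have e2 : dotp (betaT N t) (fun j => S (t+1) j - (1 + r (t+1)) * S t j)
      = dotp (betaT N t) (S (t+1)) - (1 + r (t+1)) * dotp (betaT N t) (S t) :=
    dotp_right_split _ _ _ _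
  unfold WW
  rw [eta_succ, e1, e2]
  ring

lemma GG_zero : GG α x S r N 0 = 0 := by
  unfold GG Gaux
  rw [Finset.Icc_eq_empty (by omega), Finset.sum_empty]

lemma PiP_zero : PiP α x S r N 0 = 0 := by
  have h : (Finset.range (0+1)).sup' Finset.nonempty_range_add_one (GG α x S r N)
      = GG α x S r N 0 := by
    refine le_antisymm (Finset.sup'_le _ _ fun v hv => ?_) (Finset.le_sup' _ (by simp))
    have := Finset.mem_range.mp hv
    interval_cases v
    exact le_rfl
  unfold PiP
  rw [h, GG_zero, mul_zero]

lemma WW_eq (t : ℕ) :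
    WW α x S r N t = x + GG α x S r N t + UU S N t - PiP α x S r N t := by
  induction t with
  | zero =>
    have h0 : eta α x S r N 0 = x - dotp (fun j => N 0 0 j) (fun j => S 0 j) := rfl
    unfold WW UU
    rw [h0, GG_zero, PiP_zero]
    simp [dotp, betaT, Finset.sum_range_one]
  | succ t ih =>
    have hW := WW_succ α x S r N t
    have e2 : dotp (betaT N t) (fun j => S (t+1) j - (1 + r (t+1)) * S t j)
        = dotp (betaT N t) (S (t+1)) - (1 + r (t+1)) * dotp (betaT N t) (S t) :=
      dotp_right_split _ _ _ _
    have hWt : WW α x S r N t = eta α x S r N t + dotp (betaT N t) (S t) := rfl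
    have hG : GG α x S r N (t+1) = GG α x S r N t
        + (eta α x S r N t * r (t+1)
          + ∑ i ∈ Finset.range (t+1),
              dotp (fun j => N i t j - N i (t+1) j) (fun j => S (t+1) j - S i j)) := by
      unfold GG Gaux
      rw [Finset.sum_Icc_succ_top (by omega : 1 ≤ t + 1)]
      simp only [Nat.add_sub_cancel]
    have hU : UU S N (t+1)
        = ∑ i ∈ Finset.range (t+1), dotp (N i (t+1)) (fun j => S (t+1) j - S i j) := by
      unfold UU
      rw [Finset.sum_range_succ]
      simp [dotp]
    have hsum : (∑ i ∈ Finset.range (t+1),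
          dotp (fun j => N i t j - N i (t+1) j) (fun j => S (t+1) j - S i j))
        + (∑ i ∈ Finset.range (t+1), dotp (N i (t+1)) (fun j => S (t+1) j - S i j))
        - UU S N t
        = dotp (betaT N t) (S (t+1)) - dotp (betaT N t) (S t) := by
      have hrhs : dotp (betaT N t) (S (t+1)) - dotp (betaT N t) (S t)
          = ∑ i ∈ Finset.range (t+1),
              (dotp (N i t) (S (t+1)) - dotp (N i t) (S t)) := by
        unfold dotp betaT
        rw [← Finset.sum_sub_distrib]
        have hj : ∀ j : Fin d,
            (∑ i ∈ Finset.range (t+1), N i t j) * S (t+1) j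
              - (∑ i ∈ Finset.range (t+1), N i t j) * S t j
            = ∑ i ∈ Finset.range (t+1), (N i t j * S (t+1) j - N i t j * S t j) := by
          intro j
          rw [Finset.sum_mul, Finset.sum_mul, ← Finset.sum_sub_distrib]
        rw [Finset.sum_congr rfl (fun j _ => hj j), Finset.sum_comm]
        refine Finset.sum_congr rfl fun i _ => ?_
        rw [← Finset.sum_sub_distrib]
      unfold UU
      rw [← Finset.sum_add_distrib, ← Finset.sum_sub_distrib, hrhs]
      refine Finset.sum_congr rfl fun i _ => ?_
      unfold dotp
      rw [← Finset.sum_add_distrib, ← Finset.sum_sub_distrib, ← Finset.sum_sub_distrib]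
      exact Finset.sum_congr rfl fun j _ => by ring
    linear_combination hW + e2 - hG - hU - hsum + ih + r (t+1) * hWt

end Det

lemma step_ineq {W A c P r rbar D1 : ℝ} (ih : -(A*P) ≤ W) (hA : 0 ≤ A) (hc : 0 ≤ c)
    (hP : 1 ≤ P) (hr1 : 0 ≤ r) (hr2 : r ≤ rbar) (hD1 : 0 ≤ D1) :
    -((A + c) * (P * (1+rbar))) ≤ (1+r)*W + (D1 - (1+r)*c) := by
  have key1 : 0 ≤ (1 + r) * (W + A * P) := by nlinarith
  have key2 : 0 ≤ (rbar - r) * (A * P) := by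
    have : 0 ≤ A * P := mul_nonneg hA (by linarith)
    nlinarith
  have key3 : 0 ≤ c * ((1 + rbar) * P - (1 + r)) := by
    have h4 : (1:ℝ) + r ≤ (1 + rbar) * P := by nlinarith
    nlinarith
  nlinarith

lemma key_det {d T : ℕ} (α x rbar : ℝ) (hα1 : α ≤ 1) (hrbar : 0 ≤ rbar)
    (S : ℕ → Fin d → ℝ) (hS : ∀ t j, 0 ≤ S t j)
    (r : ℕ → ℝ) (hr0 : ∀ t, 0 ≤ r t) (hrb : ∀ t, 1 ≤ t → t ≤ T → r t ≤ rbar)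
    (N : ℕ → ℕ → Fin d → ℝ) (hNnn : ∀ i t j, 0 ≤ N i t j) (hNT : ∀ i j, N i T j = 0)
    (hRL : ∀ i t j, i < t → t ≤ T → S t j < S i j → N i t j = 0)
    (q : ℕ → Fin d → ℝ) (hq0 : ∀ s, s < T → ∀ j, 0 ≤ q s j)
    (hrev : ∀ s, s < T →
      dotp (fun j => (∑ i ∈ Finset.range (s+1), N i s j) - q s j)
        (fun j => S (s+1) j - (1 + r (s+1)) * S s j) = 0) :
    -((max (-x) 0 + ∑ s ∈ Finset.range T, dotp (q s) (fun j => S s j)) * (1+rbar)^T)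
      ≤ etaHist α x S r N T T := by
  obtain ⟨u', hu'mem, hu'max⟩ :=
    Finset.exists_max_image (Finset.range (T+1)) (GG α x S r N) Finset.nonempty_range_add_one
  have hu'T : u' ≤ T := by have := Finset.mem_range.mp hu'mem; omega
  have hPi_const : ∀ t, u' ≤ t → t ≤ T → PiP α x S r N t = α * GG α x S r N u' := by
    intro t h1 h2
    unfold PiP
    congr 1
    refine le_antisymm (Finset.sup'_le _ _ fun v hv => ?_) (Finset.le_sup' _ ?_)
    · exact hu'max v (Finset.mem_range.mpr (by have := Finset.mem_range.mp hv; omega))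
    · exact Finset.mem_range.mpr (by omega)
  have hGu' : 0 ≤ GG α x S r N u' := by
    have h0 := hu'max 0 (Finset.mem_range.mpr (by omega))
    rw [GG_zero] at h0
    exact h0
  have hUnn : ∀ t, t ≤ T → 0 ≤ UU S N t := by
    intro t ht
    refine Finset.sum_nonneg fun i hi => ?_
    have hi' : i ≤ t := by have := Finset.mem_range.mp hi; omega
    unfold dotp
    refine Finset.sum_nonneg fun j _ => ?_
    show (0:ℝ) ≤ N i t j * (S t j - S i j)
    rcases eq_or_lt_of_le hi' with rfl | hit
    · simp
    by_cases hlt : S t j < S i j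
    · rw [hRL i t j hit ht hlt]; simp
    · exact mul_nonneg (hNnn i t j) (by linarith [not_lt.mp hlt])
  have hWu' : x ≤ WW α x S r N u' := by
    have hid := WW_eq α x S r N u'
    have hPi := hPi_const u' le_rfl hu'T
    nlinarith [hUnn u' hu'T, mul_nonneg (sub_nonneg.mpr hα1) hGu']
  -- the running lower bound
  have key : ∀ t, u' ≤ t → t ≤ T →
      -((max (-x) 0 + ∑ s ∈ Finset.range t, dotp (q s) (fun j => S s j)) * (1+rbar)^t)
        ≤ WW α x S r N t := by
    intro t ht
    induction t, ht using Nat.le_induction with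
    | base =>
      intro _
      have hSnn : 0 ≤ ∑ s ∈ Finset.range u', dotp (q s) (fun j => S s j) := by
        refine Finset.sum_nonneg fun s hs => ?_
        have hsT : s < T := by have := Finset.mem_range.mp hs; omega
        exact dotp_nonneg (hq0 s hsT) (fun j => hS s j)
      have hA : 0 ≤ max (-x) 0 + ∑ s ∈ Finset.range u', dotp (q s) (fun j => S s j) :=
        add_nonneg (le_max_right _ _) hSnn
      have hpow : (1:ℝ) ≤ (1+rbar)^u' := one_le_pow₀ (by linarith)
      have h1 : max (-x) 0 ≤ (max (-x) 0 + ∑ s ∈ Finset.range u', dotp (q s) (fun j => S s j))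
          * (1+rbar)^u' := by
        calc max (-x) 0 ≤ max (-x) 0 + ∑ s ∈ Finset.range u', dotp (q s) (fun j => S s j) := by
              linarith
          _ ≤ _ := le_mul_of_one_le_right hA hpow
      have h2 : -x ≤ max (-x) 0 := le_max_left _ _
      linarith [hWu']
    | succ n hn ihn =>
      intro h1n
      have hnT : n ≤ T := by omega
      have ih := ihn hnT
      have hW := WW_succ α x S r N n
      have hPi1 : PiP α x S r N (n+1) = PiP α x S r N n := by
        rw [hPi_const (n+1) (by omega) h1n, hPi_const n hn hnT]
      have hrev' : dotp (fun j => betaT N n j - q n j)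
          (fun j => S (n+1) j - (1 + r (n+1)) * S n j) = 0 := hrev n (by omega)
      have hsplit := dotp_sub_left (betaT N n) (q n)
        (fun j => S (n+1) j - (1 + r (n+1)) * S n j)
      have hq1 : dotp (betaT N n) (fun j => S (n+1) j - (1 + r (n+1)) * S n j)
          = dotp (q n) (fun j => S (n+1) j - (1 + r (n+1)) * S n j) := by
        rw [hsplit] at hrev'; linarith
      have hq2 := dotp_right_split (q n) (S (n+1)) (S n) (1 + r (n+1))
      have h3 : 0 ≤ dotp (q n) (S (n+1)) :=
        dotp_nonneg (hq0 n (by omega)) (fun j => hS (n+1) j)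
      have hc : 0 ≤ dotp (q n) (S n) := dotp_nonneg (hq0 n (by omega)) (fun j => hS n j)
      have hr1 : 0 ≤ r (n+1) := hr0 _
      have hr2 : r (n+1) ≤ rbar := hrb (n+1) (by omega) h1n
      have hpow : (1:ℝ) ≤ (1+rbar)^n := one_le_pow₀ (by linarith)
      have hA : 0 ≤ max (-x) 0 + ∑ s ∈ Finset.range n, dotp (q s) (fun j => S s j) := by
        refine add_nonneg (le_max_right _ _) (Finset.sum_nonneg fun s hs => ?_)
        have hsT : s < T := by have := Finset.mem_range.mp hs; omega
        exact dotp_nonneg (hq0 s hsT) (fun j => hS s j)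
      rw [Finset.sum_range_succ, pow_succ]
      rw [hW, hPi1, hq1, hq2]
      have := step_ineq (W := WW α x S r N n)
        (A := max (-x) 0 + ∑ s ∈ Finset.range n, dotp (q s) (fun j => S s j))
        (c := dotp (q n) (S n)) (P := (1+rbar)^n) (r := r (n+1)) (rbar := rbar)
        (D1 := dotp (q n) (S (n+1))) ih hA hc hpow hr1 hr2 h3
      linarith
  have hfin := key T hu'T le_rfl
  have hb0 : dotp (betaT N T) (S T) = 0 := by
    unfold dotp betaT
    simp [hNT]
  have hWT : WW α x S r N T = etaHist α x S r N T T + dotp (betaT N T) (S T) := rfl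
  rw [hb0, add_zero] at hWT
  linarith [hfin, hWT.symm.le]

section MeasHelpers

variable {Ω' : Type*} {mΩ : MeasurableSpace Ω'} {d' : ℕ}

lemma meas_pi_of {f : Ω' → Fin d' → ℝ} (h : ∀ j, Measurable[mΩ] fun ω => f ω j) :
    Measurable[mΩ] f := by
  letI := mΩ; exact measurable_pi_iff.2 h

lemma meas_eval {f : Ω' → Fin d' → ℝ} (h : Measurable[mΩ] f) (j : Fin d') :
    Measurable[mΩ] fun ω => f ω j := by
  letI := mΩ; exact measurable_pi_iff.1 h j

lemma meas_add_div2 {f g : Ω' → ℝ} (hf : Measurable[mΩ] f) (hg : Measurable[mΩ] g) :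
    Measurable[mΩ] fun ω => (f ω + g ω)/2 := by
  letI := mΩ; exact (hf.add hg).div_const 2

lemma meas_sub' {f g : Ω' → ℝ} (hf : Measurable[mΩ] f) (hg : Measurable[mΩ] g) :
    Measurable[mΩ] fun ω => f ω - g ω := by
  letI := mΩ; exact hf.sub hg

lemma meas_ite_pi {p : Ω' → Prop} {dp : DecidablePred p} (hp : MeasurableSet[mΩ] {ω | p ω})
    {f g : Ω' → Fin d' → ℝ} (hf : Measurable[mΩ] f) (hg : Measurable[mΩ] g) :
    Measurable[mΩ] fun ω => @ite _ (p ω) (dp ω) (f ω) (g ω) := by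
  letI := mΩ
  letI : DecidablePred p := dp
  exact Measurable.ite hp hf hg

lemma meas_sum_pi {u : Finset ℕ} {f : ℕ → Ω' → Fin d' → ℝ}
    (hf : ∀ i ∈ u, Measurable[mΩ] (f i)) :
    Measurable[mΩ] fun ω => ∑ i ∈ u, f i ω := by
  letI := mΩ; exact Finset.measurable_sum u hf

lemma meas_const_pi (c : Fin d' → ℝ) : Measurable[mΩ] (fun _ : Ω' => c) := by
  letI := mΩ; exact measurable_const

end MeasHelpers

lemma sqrt_le_mp {x y : ℝ} (hx : 0 ≤ x) (hy : 0 ≤ y)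
    (h : Real.sqrt x ≤ Real.sqrt y) : x ≤ y := by
  have := mul_self_le_mul_self (Real.sqrt_nonneg x) h
  rwa [Real.mul_self_sqrt hx, Real.mul_self_sqrt hy] at this

lemma isQ_unique (M : Market Ω T d) (t : ℕ) (β q q' : Ω → Fin d → ℝ)
    (h : M.IsQ t β q) (h' : M.IsQ t β q') : ∀ᵐ ω ∂M.P, q ω = q' ω := by
  obtain ⟨hm, hn, ⟨hcm, hcn, hcz⟩, hmin⟩ := h
  obtain ⟨hm', hn', ⟨hcm', hcn', hcz'⟩, hmin'⟩ := h'
  have mmeas : Measurable[M.F t] (fun ω (j : Fin d) => (q ω j + q' ω j)/2) :=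
    meas_pi_of fun j => meas_add_div2 (meas_eval hm j) (meas_eval hm' j)
  have mnn : ∀ ω (j : Fin d), 0 ≤ (q ω j + q' ω j)/2 := by
    intro ω j
    have h1 : 0 ≤ q ω j := hn ω j
    have h2 : 0 ≤ q' ω j := hn' ω j
    linarith
  have mrev : (fun ω j => β ω j - (q ω j + q' ω j)/2) ∈ M.RevCone t := by
    refine ⟨?_, ?_, ?_⟩
    · refine meas_pi_of fun j => ?_
      have e : (fun ω => β ω j - (q ω j + q' ω j)/2)
          = fun ω => ((β ω j - q ω j) + (β ω j - q' ω j))/2 := by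
        funext ω; ring
      rw [e]
      exact meas_add_div2 (meas_eval hcm j) (meas_eval hcm' j)
    · intro ω j
      have h1 : 0 ≤ β ω j - q ω j := hcn ω j
      have h2 : 0 ≤ β ω j - q' ω j := hcn' ω j
      linarith
    · filter_upwards [hcz, hcz'] with ω e1 e2
      have e1' : dotp (fun j => β ω j - q ω j)
          (fun j => M.S (t+1) ω j - (1 + M.r (t+1) ω) * M.S t ω j) = 0 := e1
      have e2' : dotp (fun j => β ω j - q' ω j)
          (fun j => M.S (t+1) ω j - (1 + M.r (t+1) ω) * M.S t ω j) = 0 := e2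
      show dotp (fun j => β ω j - (q ω j + q' ω j)/2)
          (fun j => M.S (t+1) ω j - (1 + M.r (t+1) ω) * M.S t ω j) = 0
      have e3 : dotp (fun j => β ω j - (q ω j + q' ω j)/2)
          (fun j => M.S (t+1) ω j - (1 + M.r (t+1) ω) * M.S t ω j)
          = (dotp (fun j => β ω j - q ω j)
              (fun j => M.S (t+1) ω j - (1 + M.r (t+1) ω) * M.S t ω j)
            + dotp (fun j => β ω j - q' ω j)
              (fun j => M.S (t+1) ω j - (1 + M.r (t+1) ω) * M.S t ω j))/2 := by
        unfold dotp
        rw [← Finset.sum_add_distrib, Finset.sum_div]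
        exact Finset.sum_congr rfl fun j _ => by ring
      rw [e3, e1', e2']
      norm_num
  have k1 := hmin q' hm' hn' ⟨hcm', hcn', hcz'⟩
  have k2 := hmin' q hm hn ⟨hcm, hcn, hcz⟩
  have k3 := hmin _ mmeas mnn mrev
  filter_upwards [k1, k2, k3] with ω e1 e2 e3
  have hs1 : ∑ j, q ω j ^ 2 ≤ ∑ j, q' ω j ^ 2 :=
    sqrt_le_mp (Finset.sum_nonneg fun j _ => sq_nonneg _)
      (Finset.sum_nonneg fun j _ => sq_nonneg _) e1
  have hs2 : ∑ j, q' ω j ^ 2 ≤ ∑ j, q ω j ^ 2 :=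
    sqrt_le_mp (Finset.sum_nonneg fun j _ => sq_nonneg _)
      (Finset.sum_nonneg fun j _ => sq_nonneg _) e2
  have hs3 : ∑ j, q ω j ^ 2 ≤ ∑ j, ((q ω j + q' ω j)/2) ^ 2 :=
    sqrt_le_mp (Finset.sum_nonneg fun j _ => sq_nonneg _)
      (Finset.sum_nonneg fun j _ => sq_nonneg _) e3
  have hpar : ∑ j, ((q ω j + q' ω j)/2) ^ 2 + ∑ j, ((q ω j - q' ω j)/2) ^ 2
      = (∑ j, q ω j ^ 2 + ∑ j, q' ω j ^ 2)/2 := by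
    rw [← Finset.sum_add_distrib, ← Finset.sum_add_distrib, Finset.sum_div]
    exact Finset.sum_congr rfl fun j _ => by ring
  have hz : ∑ j, ((q ω j - q' ω j)/2) ^ 2 ≤ 0 := by linarith
  have hz' : ∀ j ∈ Finset.univ, ((q ω j - q' ω j)/2) ^ 2 = 0 :=
    (Finset.sum_eq_zero_iff_of_nonneg fun j _ => sq_nonneg _).1
      (le_antisymm hz (Finset.sum_nonneg fun j _ => sq_nonneg _))
  funext j
  have h4 : (q ω j - q' ω j)/2 = 0 := sq_eq_zero_iff.mp (hz' j (Finset.mem_univ j))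
  linarith

lemma isQ_indicator (M : Market Ω T d) (s : ℕ) (N : ℕ → ℕ → Ω → Fin d → ℝ)
    (hNmeas : ∀ i t, Measurable[M.F t] (N i t))
    (q : Ω → Fin d → ℝ)
    (hq : M.IsQ s (fun ω => ∑ i ∈ Finset.range (s+1), N i s ω) q)
    (τ : Ω → ℕ) (hτ : IsStoppingTimeFun M.F τ) :
    M.IsQ s (fun ω => ∑ i ∈ Finset.range (s+1),
        (if s < τ ω then N i s ω else (0 : Fin d → ℝ)))
      (fun ω => if s < τ ω then q ω else 0) := by
  obtain ⟨hqm, hqn, ⟨hrm, hrn, hrz⟩, hqmin⟩ := hq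
  have hset : MeasurableSet[M.F s] {ω | s < τ ω} := by
    have e : {ω | s < τ ω} = {ω | τ ω ≤ s}ᶜ := by ext ω; simp [not_le]
    rw [e]; exact (hτ s).compl
  have hβm : Measurable[M.F s] (fun ω => ∑ i ∈ Finset.range (s+1), N i s ω) :=
    meas_sum_pi fun i _ => hNmeas i s
  refine ⟨?_, ?_, ⟨?_, ?_, ?_⟩, ?_⟩
  · exact meas_ite_pi hset hqm (meas_const_pi 0)
  · intro ω j
    by_cases h : s < τ ω <;> simp [h, hqn ω j]
  · -- measurability of β^τ - q̂
    have e : (fun ω j => (∑ i ∈ Finset.range (s+1),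
          (if s < τ ω then N i s ω else (0 : Fin d → ℝ))) j
          - (if s < τ ω then q ω else 0) j)
        = fun ω => if s < τ ω
            then (fun j => (∑ i ∈ Finset.range (s+1), N i s ω) j - q ω j)
            else 0 := by
      funext ω j
      by_cases h : s < τ ω <;> simp [h, Finset.sum_apply]
    rw [e]
    exact meas_ite_pi hset
      (meas_pi_of fun j => meas_sub' (meas_eval hβm j) (meas_eval hqm j))
      (meas_const_pi 0)
  · intro ω j
    show (0:ℝ) ≤ (∑ i ∈ Finset.range (s+1),
        (if s < τ ω then N i s ω else (0 : Fin d → ℝ))) j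
        - (if s < τ ω then q ω else 0) j
    by_cases h : s < τ ω
    · have h1 : 0 ≤ (fun j => (∑ i ∈ Finset.range (s+1), N i s ω) j - q ω j) j := hrn ω j
      simpa [h, Finset.sum_apply] using h1
    · simp [h, Finset.sum_apply]
  · filter_upwards [hrz] with ω hz
    have hz' : dotp (fun j => (∑ i ∈ Finset.range (s+1), N i s ω) j - q ω j)
        (fun j => M.S (s+1) ω j - (1 + M.r (s+1) ω) * M.S s ω j) = 0 := hz
    show dotp (fun j => (∑ i ∈ Finset.range (s+1),
        (if s < τ ω then N i s ω else (0 : Fin d → ℝ))) j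
        - (if s < τ ω then q ω else 0) j)
        (fun j => M.S (s+1) ω j - (1 + M.r (s+1) ω) * M.S s ω j) = 0
    by_cases h : s < τ ω
    · have e : (fun j => (∑ i ∈ Finset.range (s+1),
            (if s < τ ω then N i s ω else (0 : Fin d → ℝ))) j
            - (if s < τ ω then q ω else 0) j)
          = fun j => (∑ i ∈ Finset.range (s+1), N i s ω) j - q ω j := by
        funext j; simp [h, Finset.sum_apply]
      rw [e, hz']
    · have e : (fun j => (∑ i ∈ Finset.range (s+1),
            (if s < τ ω then N i s ω else (0 : Fin d → ℝ))) j
            - (if s < τ ω then q ω else 0) j)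
          = fun _ => (0:ℝ) := by
        funext j; simp [h, Finset.sum_apply]
      rw [e]
      simp [dotp]
  · intro q' hq'm hq'n hq'rev
    have hq2m : Measurable[M.F s] (fun ω => if s < τ ω then q' ω else q ω) :=
      meas_ite_pi hset hq'm hqm
    have hq2n : ∀ ω j, 0 ≤ (if s < τ ω then q' ω else q ω) j := by
      intro ω j; by_cases h : s < τ ω <;> simp [h, hq'n ω j, hqn ω j]
    have hq2rev : (fun ω j => (∑ i ∈ Finset.range (s+1), N i s ω) j
        - (if s < τ ω then q' ω else q ω) j) ∈ M.RevCone s := by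
      refine ⟨?_, ?_, ?_⟩
      · exact meas_pi_of fun j => meas_sub' (meas_eval hβm j) (meas_eval hq2m j)
      · intro ω j
        show (0:ℝ) ≤ (∑ i ∈ Finset.range (s+1), N i s ω) j
            - (if s < τ ω then q' ω else q ω) j
        by_cases h : s < τ ω
        · have h1 : 0 ≤ (fun j => (∑ i ∈ Finset.range (s+1),
              (if s < τ ω then N i s ω else (0 : Fin d → ℝ))) j - q' ω j) j :=
            hq'rev.2.1 ω j
          simp only [h, if_true]
          simpa [h, Finset.sum_apply] using h1
        · have h1 : 0 ≤ (fun j => (∑ i ∈ Finset.range (s+1), N i s ω) j - q ω j) j :=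
            hrn ω j
          simpa [h] using h1
      · filter_upwards [hq'rev.2.2, hrz] with ω h1 h2
        have h1' : dotp (fun j => (∑ i ∈ Finset.range (s+1),
            (if s < τ ω then N i s ω else (0 : Fin d → ℝ))) j - q' ω j)
            (fun j => M.S (s+1) ω j - (1 + M.r (s+1) ω) * M.S s ω j) = 0 := h1
        have h2' : dotp (fun j => (∑ i ∈ Finset.range (s+1), N i s ω) j - q ω j)
            (fun j => M.S (s+1) ω j - (1 + M.r (s+1) ω) * M.S s ω j) = 0 := h2
        show dotp (fun j => (∑ i ∈ Finset.range (s+1), N i s ω) j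
            - (if s < τ ω then q' ω else q ω) j)
            (fun j => M.S (s+1) ω j - (1 + M.r (s+1) ω) * M.S s ω j) = 0
        by_cases h : s < τ ω
        · have e : (fun j => (∑ i ∈ Finset.range (s+1), N i s ω) j
              - (if s < τ ω then q' ω else q ω) j)
              = fun j => (∑ i ∈ Finset.range (s+1),
                  (if s < τ ω then N i s ω else (0 : Fin d → ℝ))) j - q' ω j := by
            funext j; simp [h, Finset.sum_apply]
          rw [e, h1']
        · have e : (fun j => (∑ i ∈ Finset.range (s+1), N i s ω) j
              - (if s < τ ω then q' ω else q ω) j)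
              = fun j => (∑ i ∈ Finset.range (s+1), N i s ω) j - q ω j := by
            funext j; simp [h]
          rw [e, h2']
    filter_upwards [hqmin _ hq2m hq2n hq2rev] with ω hle
    by_cases h : s < τ ω
    · simpa [h] using hle
    · simp only [h, if_false]
      calc eucNorm (0 : Fin d → ℝ) = 0 := by simp [eucNorm]
        _ ≤ eucNorm (q' ω) := Real.sqrt_nonneg _

end LB

/-- Properties of the loss bound `L_t(N)`: (i) it is consistent with
stopping, `L_t(N^{(τ)}) = L_{t ∧ τ}(N)`; (ii) for a strategy that realizes losses,
`V^α(x,N) ≥ -L_T(N)` a.s. -/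
theorem lossBound_stopped_and_lower_bound
    (M : Market Ω T d) (α : ℝ) (hα0 : 0 ≤ α) (hα1 : α < 1)
    (hS : ∀ t ω j, 0 ≤ M.S t ω j) (rbar : ℝ) (hrbar : 0 ≤ rbar)
    (hr : ∀ᵐ ω ∂M.P, ∀ t, 1 ≤ t → t ≤ T → M.r t ω ≤ rbar)
    (x : ℝ) (N : ℕ → ℕ → Ω → Fin d → ℝ) (hN : M.IsStrategy N)
    (qN : ℕ → Ω → Fin d → ℝ)
    (hqN : ∀ s, s < T → M.IsQ s (fun ω => ∑ i ∈ Finset.range (s + 1), N i s ω) (qN s)) :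
    (∀ τ : Ω → ℕ, IsStoppingTimeFun M.F τ → (∀ ω, τ ω ≤ T) →
      ∀ qτ : ℕ → Ω → Fin d → ℝ,
        (∀ s, s < T → M.IsQ s
          (fun ω => ∑ i ∈ Finset.range (s + 1),
            (if s < τ ω then N i s ω else (0 : Fin d → ℝ))) (qτ s)) →
        ∀ t, t ≤ T → ∀ᵐ ω ∂M.P,
          Lfun x rbar T M.S qτ t ω = Lfun x rbar T M.S qN (min t (τ ω)) ω) ∧
    (M.RealizesLosses N →
      ∀ᵐ ω ∂M.P, -(Lfun x rbar T M.S qN T ω) ≤ M.V α x N ω) := by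


  constructor
  · -- (i) consistency with stopping
    intro τ hτst hτT qτ hqτ t ht
    have hall : ∀ᵐ ω ∂M.P, ∀ s, s < T →
        qτ s ω = if s < τ ω then qN s ω else 0 := by
      rw [MeasureTheory.ae_all_iff]
      intro s
      by_cases hs : s < T
      · filter_upwards [LB.isQ_unique M s _ (qτ s) _ (hqτ s hs)
          (LB.isQ_indicator M s N hN.1 (qN s) (hqN s hs) τ hτst)] with ω h _
        exact h
      · exact Filter.Eventually.of_forall fun ω h => absurd h hs
    filter_upwards [hall] with ω hω
    have hsum : ∑ s ∈ Finset.range t, dotp (qτ s ω) (fun j => M.S s ω j)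
        = ∑ s ∈ Finset.range (min t (τ ω)), dotp (qN s ω) (fun j => M.S s ω j) := by
      have h1 : ∀ s ∈ Finset.range t, dotp (qτ s ω) (fun j => M.S s ω j)
          = if s < τ ω then dotp (qN s ω) (fun j => M.S s ω j) else 0 := by
        intro s hsr
        have hs : s < T := lt_of_lt_of_le (Finset.mem_range.mp hsr) ht
        rw [hω s hs]
        by_cases h : s < τ ω
        · simp [h]
        · simp [h, dotp]
      rw [Finset.sum_congr rfl h1, ← Finset.sum_filter]
      congr 1
      ext s
      simp only [Finset.mem_filter, Finset.mem_range, lt_min_iff]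
    unfold Lfun
    rw [hsum]
  · -- (ii) lower bound for loss-realizing strategies
    intro hRL
    have hrev_ae : ∀ᵐ ω ∂M.P, ∀ s, s < T →
        dotp (fun j => (∑ i ∈ Finset.range (s+1), N i s ω j) - qN s ω j)
          (fun j => M.S (s+1) ω j - (1 + M.r (s+1) ω) * M.S s ω j) = 0 := by
      rw [MeasureTheory.ae_all_iff]
      intro s
      by_cases hs : s < T
      · filter_upwards [(hqN s hs).2.2.1.2.2] with ω h _
        have h' : dotp (fun j => (∑ i ∈ Finset.range (s+1), N i s ω) j - qN s ω j)
            (fun j => M.S (s+1) ω j - (1 + M.r (s+1) ω) * M.S s ω j) = 0 := h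
        have e : (fun j => (∑ i ∈ Finset.range (s+1), N i s ω) j - qN s ω j)
            = fun j => (∑ i ∈ Finset.range (s+1), N i s ω j) - qN s ω j := by
          funext j; simp [Finset.sum_apply]
        rwa [e] at h'
      · exact Filter.Eventually.of_forall fun ω h => absurd h hs
    have hRL_ae : ∀ᵐ ω ∂M.P, ∀ i t (j : Fin d), i < t → t ≤ T →
        M.S t ω j < M.S i ω j → N i t ω j = 0 := by
      rw [MeasureTheory.ae_all_iff]
      intro i
      rw [MeasureTheory.ae_all_iff]
      intro t
      rw [MeasureTheory.ae_all_iff]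
      intro j
      by_cases h : i < t ∧ t ≤ T
      · filter_upwards [hRL i t j h.1 h.2] with ω hh _ _
        exact hh
      · exact Filter.Eventually.of_forall fun ω h1 h2 => absurd ⟨h1, h2⟩ h
    filter_upwards [hr, hrev_ae, hRL_ae] with ω hrω hrevω hRLω
    exact LB.key_det α x rbar (le_of_lt hα1) hrbar (fun u => M.S u ω)
      (fun u j => hS u ω j) (fun u => M.r u ω) (fun u => M.r_nonneg u ω)
      (fun u h1 h2 => hrω u h1 h2) (fun i u => N i u ω)
      (fun i u j => hN.2.1 i u ω j) (fun i j => hN.2.2.2.1 i ω j)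
      (fun i u j hit htT hlt => hRLω i u j hit htT hlt)
      (fun s => qN s ω) (fun s hs j => (hqN s hs).2.1 ω j)
      (fun s hs => hrevω s hs)

end
end
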